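/- arXiv:2011.00352 — 3 statements merged into one kernel-verified Lean document; each statement's English description precedes it below -/
import Mathlib

section
/- Let G be a simple graph such that for every n ∈ ℕ there is an isometric path of length n in G. Then there is a family (A_n)_{n ∈ ℕ} of pairwise disjoint finite subsets of the vertex set of G, with no edge of G between distinct A_n, such that each induced subgraph G↾A_n is a path of length at least n that is isometric in G. -/
open SimpleGraph

/-- An induced path of length `n` in `G`: an injective sequence of `n+1` vertices,
adjacent exactly when consecutive. -/
def IsInducedPath {V : Type*} (G : SimpleGraph V) {n : ℕ} (x : Fin (n + 1) → V) : Prop :=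
  Function.Injective x ∧ ∀ i j, G.Adj (x i) (x j) ↔ Nat.dist i.val j.val = 1

/-- `G` contains finite induced paths of unbounded length. -/
def HasUnboundedPaths {V : Type*} (G : SimpleGraph V) : Prop :=
  ∀ n : ℕ, ∃ x : Fin (n + 1) → V, IsInducedPath G x

/-- `G` is path-minimal. -/
def PathMinimal {V : Type*} (G : SimpleGraph V) : Prop :=
  HasUnboundedPaths G ∧
    ∀ A : Set V, HasUnboundedPaths (G.induce A) → Nonempty (G ↪g G.induce A)

/-- The age of `G` is contained in the age of `H`. -/
def AgeSubset {V W : Type*} (G : SimpleGraph V) (H : SimpleGraph W) : Prop :=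
  ∀ (n : ℕ) (F : SimpleGraph (Fin n)), Nonempty (F ↪g G) → Nonempty (F ↪g H)

/-- The age of `G` contains no infinite antichain for embeddability. -/
def AgeWQO {V : Type*} (G : SimpleGraph V) : Prop :=
  ∀ f : ℕ → Σ n : ℕ, SimpleGraph (Fin n),
    (∀ i, Nonempty ((f i).2 ↪g G)) →
    ∃ i j, i ≠ j ∧ Nonempty ((f i).2 ↪g (f j).2)

/-- The set `A` carries an induced path of length `n` of `G` (covering all of `A`). -/
def IsPathOn {V : Type*} (G : SimpleGraph V) (A : Set V) (n : ℕ) : Prop :=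
  ∃ x : Fin (n + 1) → V, Function.Injective x ∧ Set.range x = A ∧
    ∀ i j, G.Adj (x i) (x j) ↔ Nat.dist i.val j.val = 1

/-- `G` embeds a direct sum of finite induced paths of unbounded length. -/
def EmbedsDirectSumOfPaths {V : Type*} (G : SimpleGraph V) : Prop :=
  ∃ A : ℕ → Set V, (∀ n, (A n).Finite) ∧
    (∀ m n, m ≠ n → Disjoint (A m) (A n)) ∧
    (∀ m n, m ≠ n → ∀ x ∈ A m, ∀ y ∈ A n, ¬ G.Adj x y) ∧
    ∀ n, ∃ m, n ≤ m ∧ IsPathOn G (A n) m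

/-- `G` embeds a complete sum of finite induced paths of unbounded length. -/
def EmbedsCompleteSumOfPaths {V : Type*} (G : SimpleGraph V) : Prop :=
  ∃ A : ℕ → Set V, (∀ n, (A n).Finite) ∧
    (∀ m n, m ≠ n → Disjoint (A m) (A n)) ∧
    (∀ m n, m ≠ n → ∀ x ∈ A m, ∀ y ∈ A n, G.Adj x y) ∧
    ∀ n, ∃ m, n ≤ m ∧ IsPathOn G (A n) m

/-- An isometric path of length `n` in `G`. -/
def IsIsometricPath {V : Type*} (G : SimpleGraph V) {n : ℕ} (x : Fin (n + 1) → V) : Prop :=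
  (∀ i : Fin n, G.Adj (x i.castSucc) (x i.succ)) ∧
  ∀ i j, G.dist (x i) (x j) = Nat.dist i.val j.val

/-- The set `A` carries an induced path of length `n` of `G` which is isometric in `G`. -/
def IsIsometricPathOn {V : Type*} (G : SimpleGraph V) (A : Set V) (n : ℕ) : Prop :=
  ∃ x : Fin (n + 1) → V, Function.Injective x ∧ Set.range x = A ∧
    (∀ i j, G.Adj (x i) (x j) ↔ Nat.dist i.val j.val = 1) ∧
    (∀ i j, G.dist (x i) (x j) = Nat.dist i.val j.val)

/-- The incomparability graph of a poset. -/
def incGraph (α : Type*) [PartialOrder α] : SimpleGraph α where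
  Adj a b := ¬ a ≤ b ∧ ¬ b ≤ a
  symm := ⟨fun _ _ h => ⟨h.2, h.1⟩⟩
  loopless := ⟨fun _ h => h.1 le_rfl⟩

/-- `w` is a (finite) factor of the infinite word `u`. -/
def IsFactor {A : Type*} (u : ℕ → A) (w : List A) : Prop :=
  ∃ p : ℕ, w = (List.range w.length).map fun i => u (p + i)

/-- `u` is uniformly recurrent. -/
def UniformlyRecurrent {A : Type*} (u : ℕ → A) : Prop :=
  ∀ n : ℕ, ∃ m : ℕ, ∀ v w : List A, IsFactor u v → IsFactor u w →
    v.length = n → w.length = m → v <:+: w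

/-- The set of factors of `u` is inexhaustible. -/
def Inexhaustible {A : Type*} (u : ℕ → A) : Prop :=
  ∀ v v' : List A, IsFactor u v → IsFactor u v' → ∃ w : List A, IsFactor u (v ++ w ++ v')

/-- The path on `n` vertices. -/
def pathG (n : ℕ) : SimpleGraph (Fin n) where
  Adj i j := Nat.dist i.val j.val = 1
  symm := ⟨fun i j h => by (try dsimp only at h ⊢); rwa [Nat.dist_comm]⟩
  loopless := ⟨fun i h => by (try dsimp only at h); simp [Nat.dist_self] at h⟩

/-- The graph `Ĝ_k` on `ℕ × ℕ`. -/
def Ghat (k : ℕ) : SimpleGraph (ℕ × ℕ) where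
  Adj a b := (a.1 = b.1 ∧ Nat.dist a.2 b.2 = 1) ∨ (a.1 ≠ b.1 ∧ ¬ a.2 ≡ b.2 [MOD k])
  symm := by
    constructor
    intro a b h
    rcases h with ⟨h1, h2⟩ | ⟨h1, h2⟩
    · exact Or.inl ⟨h1.symm, by rwa [Nat.dist_comm]⟩
    · exact Or.inr ⟨h1.symm, fun h => h2 h.symm⟩
  loopless := by
    constructor
    intro a h
    rcases h with ⟨_, h2⟩ | ⟨h1, _⟩
    · simp [Nat.dist_self] at h2
    · exact h1 rfl

/-- The vertex set of `Q̂_k`. -/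
def Qset : Set (ℕ × ℕ) := {p : ℕ × ℕ | p.2 < p.1 + 5}

/-- The graph `Q̂_k`, induced by `Ĝ_k` on `Qset`. -/
def Qhat (k : ℕ) : SimpleGraph Qset := (Ghat k).induce Qset

/-- `M` is a module (autonomous set) of `G`. -/
def IsModule {V : Type*} (G : SimpleGraph V) (M : Set V) : Prop :=
  ∀ v ∉ M, (∀ x ∈ M, G.Adj v x) ∨ (∀ x ∈ M, ¬ G.Adj v x)

/-- A trivial subset of a vertex set: empty, a singleton, or everything. -/
def IsTrivialSet {V : Type*} (M : Set V) : Prop :=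
  M = ∅ ∨ (∃ v, M = {v}) ∨ M = Set.univ

/-- The graph `Ĝ_{u,⊕}` associated with the word `u : ℕ → Bool` and the Boolean sum. -/
def GhatXor (u : ℕ → Bool) : SimpleGraph (ℕ × ℕ) where
  Adj a b := (a.1 = b.1 ∧ Nat.dist a.2 b.2 = 1) ∨ (a.1 ≠ b.1 ∧ u a.2 ≠ u b.2)
  symm := by
    constructor
    intro a b h
    rcases h with ⟨h1, h2⟩ | ⟨h1, h2⟩
    · exact Or.inl ⟨h1.symm, by rwa [Nat.dist_comm]⟩
    · exact Or.inr ⟨h1.symm, h2.symm⟩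
  loopless := by
    constructor
    intro a h
    rcases h with ⟨_, h2⟩ | ⟨h1, _⟩
    · simp [Nat.dist_self] at h2
    · exact h1 rfl

/-- The graph `Ĝ_{u,π₂}` associated with the word `u : ℕ → Bool` and the second projection. -/
def GhatPi2 (u : ℕ → Bool) : SimpleGraph (ℕ × ℕ) where
  Adj a b := (a.1 = b.1 ∧ Nat.dist a.2 b.2 = 1) ∨
    (a.1 < b.1 ∧ u b.2 = true) ∨ (b.1 < a.1 ∧ u a.2 = true)
  symm := by
    constructor
    intro a b h
    rcases h with ⟨h1, h2⟩ | ⟨h1, h2⟩ | ⟨h1, h2⟩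
    · exact Or.inl ⟨h1.symm, by rwa [Nat.dist_comm]⟩
    · exact Or.inr (Or.inr ⟨h1, h2⟩)
    · exact Or.inr (Or.inl ⟨h1, h2⟩)
  loopless := by
    constructor
    intro a h
    rcases h with ⟨_, h2⟩ | ⟨h1, _⟩ | ⟨h1, _⟩
    · simp [Nat.dist_self] at h2
    · exact lt_irrefl _ h1
    · exact lt_irrefl _ h1

/-- `u` has a constant factor of length `m`. -/
def HasConstFactor (u : ℕ → Bool) (m : ℕ) : Prop :=
  ∃ p : ℕ, ∀ i < m, u (p + i) = u p


open Classical in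
lemma aux_segment {V : Type*} (G : SimpleGraph V)
    (h : ∀ n : ℕ, ∃ x : Fin (n + 1) → V, IsIsometricPath G x)
    (F : Finset V) (n : ℕ) :
    ∃ y : Fin (n + 1) → V, Function.Injective y ∧
      (∀ i j, G.Adj (y i) (y j) ↔ Nat.dist i.val j.val = 1) ∧
      (∀ i j, G.dist (y i) (y j) = Nat.dist i.val j.val) ∧
      (∀ i, y i ∉ F ∧ ∀ v ∈ F, ¬ G.Adj v (y i)) := by
  classical
  set s := F.card with hs
  set L := n + 1 with hL
  set K := 3 * s + 1 with hK
  set N := K * L with hN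
  obtain ⟨x, hxadj, hdist⟩ := h N
  have hadj_iff : ∀ i j : Fin (N + 1), G.Adj (x i) (x j) ↔ Nat.dist i.val j.val = 1 := by
    intro i j
    rw [← SimpleGraph.dist_eq_one_iff_adj, hdist]
  -- a "bad" index is one whose vertex is in F or adjacent to F
  have hclose : ∀ (v : V) (i j : Fin (N + 1)),
      (x i = v ∨ G.Adj v (x i)) → (x j = v ∨ G.Adj v (x j)) →
      Nat.dist i.val j.val ≤ 2 := by
    intro v i j hi hj
    have : G.dist (x i) (x j) ≤ 2 := by
      rcases hi with hi | hi
      · rcases hj with hj | hj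
        · rw [hi, ← hj, SimpleGraph.dist_self]; omega
        · have : G.Adj (x i) (x j) := by rw [hi]; exact hj
          have := SimpleGraph.dist_eq_one_iff_adj.mpr this
          omega
      · rcases hj with hj | hj
        · have : G.Adj (x j) (x i) := by rw [hj]; exact hi
          have := SimpleGraph.dist_eq_one_iff_adj.mpr this.symm
          omega
        · have := SimpleGraph.dist_le
            (SimpleGraph.Walk.cons hi.symm (SimpleGraph.Walk.cons hj SimpleGraph.Walk.nil))
          simp only [SimpleGraph.Walk.length_cons, SimpleGraph.Walk.length_nil] at this
          omega
    rwa [hdist] at this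
  have hNbound : ∀ k j : ℕ, k < K → j < L → L * k + j < N + 1 := by
    intro k j hk hj
    have h1 : L * (k + 1) ≤ L * K := Nat.mul_le_mul_left L hk
    have h2 : L * (k + 1) = L * k + L := by ring
    have h3 : L * K = N := by rw [hN]; ring
    omega
  -- find a good block
  have hgood : ∃ k, ∃ hk : k < K, ∀ j (hj : j < L),
      x ⟨L * k + j, hNbound k j hk hj⟩ ∉ F ∧
      ∀ v ∈ F, ¬ G.Adj v (x ⟨L * k + j, hNbound k j hk hj⟩) := by
    by_contra hcon
    push_neg at hcon
    -- for each block pick a bad index and a witness in F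
    have hpick : ∀ k : Fin K, ∃ j : ℕ, ∃ hj : j < L, ∃ v ∈ F,
        x ⟨L * k.val + j, hNbound k.val j k.isLt hj⟩ = v ∨
        G.Adj v (x ⟨L * k.val + j, hNbound k.val j k.isLt hj⟩) := by
      intro k
      obtain ⟨j, hj, hbad⟩ := hcon k.val k.isLt
      by_cases hmem : x ⟨L * k.val + j, hNbound k.val j k.isLt hj⟩ ∈ F
      · exact ⟨j, hj, _, hmem, Or.inl rfl⟩
      · obtain ⟨v, hv, hadj⟩ := hbad hmem
        exact ⟨j, hj, v, hv, Or.inr hadj⟩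
    choose jf hjf vf hvf hw using hpick
    set φ : Fin K → V × Fin 3 := fun k =>
      (vf k, ⟨(L * k.val + jf k) % 3, Nat.mod_lt _ (by omega)⟩) with hφ
    have hmaps : ∀ k ∈ (Finset.univ : Finset (Fin K)),
        φ k ∈ F ×ˢ (Finset.univ : Finset (Fin 3)) := by
      intro k _
      simp [hφ, hvf k]
    have hcards : (F ×ˢ (Finset.univ : Finset (Fin 3))).card <
        (Finset.univ : Finset (Fin K)).card := by
      simp [Finset.card_product, hK, hs]
      omega
    obtain ⟨k, _, k', _, hkk', heq⟩ :=
      Finset.exists_ne_map_eq_of_card_lt_of_maps_to hcards hmaps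
    have hv_eq : vf k = vf k' := congrArg Prod.fst heq
    have hmod : (L * k.val + jf k) % 3 = (L * k'.val + jf k') % 3 := by
      have := congrArg Prod.snd heq
      simpa [hφ] using congrArg Fin.val this
    have hd : Nat.dist (L * k.val + jf k) (L * k'.val + jf k') ≤ 2 := by
      exact hclose (vf k) ⟨L * k.val + jf k, hNbound _ _ k.isLt (hjf k)⟩
        ⟨L * k'.val + jf k', hNbound _ _ k'.isLt (hjf k')⟩ (hw k) (by rw [hv_eq]; exact hw k')
    have heqidx : L * k.val + jf k = L * k'.val + jf k' := by
      simp only [Nat.dist] at hd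
      omega
    -- same block forced
    have hkval : k.val = k'.val := by
      rcases Nat.lt_trichotomy k.val k'.val with hlt | heq2 | hgt
      · have h1 : L * (k.val + 1) ≤ L * k'.val := Nat.mul_le_mul_left L hlt
        have h2 : L * (k.val + 1) = L * k.val + L := by ring
        have := hjf k
        omega
      · exact heq2
      · have h1 : L * (k'.val + 1) ≤ L * k.val := Nat.mul_le_mul_left L hgt
        have h2 : L * (k'.val + 1) = L * k'.val + L := by ring
        have := hjf k'
        omega
    exact hkk' (Fin.ext hkval)
  obtain ⟨k, hk, hkgood⟩ := hgood
  refine ⟨fun i => x ⟨L * k + i.val, hNbound k i.val hk (by omega)⟩, ?_, ?_, ?_, ?_⟩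
  · intro i j hij
    have hij' : x ⟨L * k + i.val, hNbound k i.val hk i.isLt⟩
        = x ⟨L * k + j.val, hNbound k j.val hk j.isLt⟩ := hij
    have h0 : G.dist (x ⟨L * k + i.val, hNbound k i.val hk i.isLt⟩)
        (x ⟨L * k + j.val, hNbound k j.val hk j.isLt⟩) = 0 := by
      rw [hij', SimpleGraph.dist_self]
    rw [hdist] at h0
    simp only at h0
    have := Nat.eq_of_dist_eq_zero h0
    exact Fin.ext (by omega)
  · intro i j
    rw [hadj_iff]
    simp only
    rw [Nat.dist_add_add_left]
  · intro i j
    rw [hdist]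
    simp only
    rw [Nat.dist_add_add_left]
  · intro i
    exact hkgood i.val (by omega)

theorem embeds_direct_sum_of_isometric_paths {V : Type*} (G : SimpleGraph V)
    (h : ∀ n : ℕ, ∃ x : Fin (n + 1) → V, IsIsometricPath G x) :
    ∃ A : ℕ → Set V, (∀ n, (A n).Finite) ∧
      (∀ m n, m ≠ n → Disjoint (A m) (A n)) ∧
      (∀ m n, m ≠ n → ∀ x ∈ A m, ∀ y ∈ A n, ¬ G.Adj x y) ∧
      ∀ n, ∃ m, n ≤ m ∧ IsIsometricPathOn G (A n) m := by
  classical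
  obtain ⟨Y, hY⟩ : ∃ Y : Finset V → (n : ℕ) → Fin (n + 1) → V,
      ∀ (F : Finset V) (n : ℕ), Function.Injective (Y F n) ∧
        (∀ i j, G.Adj (Y F n i) (Y F n j) ↔ Nat.dist i.val j.val = 1) ∧
        (∀ i j, G.dist (Y F n i) (Y F n j) = Nat.dist i.val j.val) ∧
        (∀ i, Y F n i ∉ F ∧ ∀ v ∈ F, ¬ G.Adj v (Y F n i)) := by
    have := fun (F : Finset V) (n : ℕ) => aux_segment G h F n
    choose Y hY using this
    exact ⟨Y, hY⟩
  -- cumulative finsets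
  let Fs : ℕ → Finset V := fun n =>
    Nat.rec ∅ (fun k Fk => Fk ∪ (Finset.univ.image (Y Fk k))) n
  have hFs_succ : ∀ n, Fs (n + 1) = Fs n ∪ (Finset.univ.image (Y (Fs n) n)) := fun n => rfl
  have hFs_mono : ∀ {m n : ℕ}, m ≤ n → Fs m ⊆ Fs n := by
    intro m n hmn
    induction n with
    | zero => simp_all
    | succ k ih =>
      rcases Nat.lt_or_ge m (k + 1) with hlt | hge
      · have := ih (by omega)
        rw [hFs_succ]
        exact this.trans Finset.subset_union_left
      · have : m = k + 1 := by omega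
        subst this; rfl
  refine ⟨fun n => Set.range (Y (Fs n) n), ?_, ?_, ?_, ?_⟩
  · intro n; exact Set.finite_range _
  · -- disjointness
    have key : ∀ m n, m < n → Disjoint (Set.range (Y (Fs m) m)) (Set.range (Y (Fs n) n)) := by
      intro m n hmn
      rw [Set.disjoint_left]
      rintro a ⟨i, rfl⟩ ⟨j, hj⟩
      have hmem : Y (Fs m) m i ∈ Fs (m + 1) := by
        rw [hFs_succ]
        exact Finset.mem_union_right _ (Finset.mem_image_of_mem _ (Finset.mem_univ i))
      have hmem2 : Y (Fs m) m i ∈ Fs n := hFs_mono hmn hmem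
      have := ((hY (Fs n) n).2.2.2 j).1
      rw [← hj] at hmem2
      exact this hmem2
    intro m n hmn
    rcases Nat.lt_or_ge m n with hlt | hge
    · exact key m n hlt
    · exact (key n m (by omega)).symm
  · -- no adjacency
    have key : ∀ m n, m < n → ∀ a ∈ Set.range (Y (Fs m) m), ∀ b ∈ Set.range (Y (Fs n) n),
        ¬ G.Adj a b := by
      rintro m n hmn a ⟨i, rfl⟩ b ⟨j, rfl⟩ hadj
      have hmem : Y (Fs m) m i ∈ Fs (m + 1) := by
        rw [hFs_succ]
        exact Finset.mem_union_right _ (Finset.mem_image_of_mem _ (Finset.mem_univ i))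
      have hmem2 : Y (Fs m) m i ∈ Fs n := hFs_mono hmn hmem
      exact ((hY (Fs n) n).2.2.2 j).2 _ hmem2 hadj
    intro m n hmn a ha b hb
    rcases Nat.lt_or_ge m n with hlt | hge
    · exact key m n hlt a ha b hb
    · intro hadj
      exact key n m (by omega) b hb a ha hadj.symm
  · intro n
    exact ⟨n, le_rfl, Y (Fs n) n, (hY (Fs n) n).1, rfl,
      (hY (Fs n) n).2.1, (hY (Fs n) n).2.2.1⟩
end

section
/- Let u : ℕ → {0,1} be a uniformly recurrent word that is not constant. Then every induced path of length at least φ(u) in the graph Ĝ_{u,⊕} is contained in a single component: all its vertices have the same first coordinate. -/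
open SimpleGraph

lemma PZwalk (s : ℕ → ℕ) (d : ℕ)
    (h1 : ∀ t, t < d → Nat.dist (s t) (s (t+1)) = 1)
    (h2 : ∀ t, t + 2 ≤ d → s t ≠ s (t+2)) :
    (∀ t, t ≤ d → s t = s 0 + t) ∨ (∀ t, t ≤ d → s t + t = s 0) := by
  have key : ∀ t, t < d → (s (t+1) = s t + 1 ∨ s t = s (t+1) + 1) := by
    intro t ht
    have := h1 t ht
    simp [Nat.dist] at this
    omega
  rcases Nat.eq_zero_or_pos d with rfl | hd
  · left; intro t ht; have : t = 0 := by omega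
    subst this; simp
  · rcases key 0 hd with h | h
    · left
      intro t
      induction t using Nat.strong_induction_on with
      | _ t ih =>
        intro htd
        rcases t with _ | (_ | t)
        · simp
        · simpa using h
        · have a0 := ih t (by omega) (by omega)
          have a1 := ih (t+1) (by omega) (by omega)
          have k := key (t+1) (by omega)
          have e : s (t+1+1) = s (t+2) := rfl
          have ne := h2 t (by omega)
          omega
    · right
      intro t
      induction t using Nat.strong_induction_on with
      | _ t ih =>
        intro htd
        rcases t with _ | (_ | t)
        · simp
        · omega
        · have a0 := ih t (by omega) (by omega)
          have a1 := ih (t+1) (by omega) (by omega)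
          have k := key (t+1) (by omega)
          have e : s (t+1+1) = s (t+2) := rfl
          have ne := h2 t (by omega)
          omega

lemma PZbool3 {a b c : Bool} (h1 : a ≠ b) (h2 : b ≠ c) : a = c := by
  cases a <;> cases b <;> cases c <;> simp_all

lemma PZaux (u : ℕ → Bool) (l n : ℕ) (hl1 : 1 ≤ l)
    (hlmax : ∀ m, HasConstFactor u m → m ≤ l)
    (hn6 : 6 ≤ n) (hn2l : 2 * l + 3 ≤ n)
    (y : ℕ → ℕ × ℕ)
    (hinj : ∀ j k, j ≤ n → k ≤ n → y j = y k → j = k)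
    (hadj : ∀ j k, j ≤ n → k ≤ n → ((GhatXor u).Adj (y j) (y k) ↔ Nat.dist j k = 1)) :
    ∀ j k, j ≤ n → k ≤ n → (y j).1 = (y k).1 := by
  -- basic adjacency facts
  have hadj' : ∀ a b : ℕ × ℕ, (GhatXor u).Adj a b ↔
      ((a.1 = b.1 ∧ Nat.dist a.2 b.2 = 1) ∨ (a.1 ≠ b.1 ∧ u a.2 ≠ u b.2)) :=
    fun a b => Iff.rfl
  -- far pairs with different rows have same colors
  have hB : ∀ j k, j + 2 ≤ k → k ≤ n → (y j).1 ≠ (y k).1 → u (y j).2 = u (y k).2 := by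
    intro j k h2 hk hr
    have hd : Nat.dist j k ≠ 1 := by simp [Nat.dist]; omega
    have hna : ¬ (GhatXor u).Adj (y j) (y k) := fun ha => hd ((hadj j k (by omega) hk).mp ha)
    by_contra hc
    exact hna ((hadj' _ _).mpr (Or.inr ⟨hr, hc⟩))
  have hB' : ∀ j k, j + 2 ≤ k → k ≤ n → u (y j).2 ≠ u (y k).2 → (y j).1 = (y k).1 := by
    intro j k h2 hk hc
    by_contra hr
    exact hc (hB j k h2 hk hr)
  -- crossings flip colors
  have hD : ∀ t, t + 1 ≤ n → (y t).1 ≠ (y (t+1)).1 → u (y t).2 ≠ u (y (t+1)).2 := by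
    intro t ht hr
    have ha : (GhatXor u).Adj (y t) (y (t+1)) := by
      rw [hadj t (t+1) (by omega) ht]
      simp [Nat.dist]
    rcases (hadj' _ _).mp ha with ⟨h1, _⟩ | ⟨_, h2⟩
    · exact absurd h1 hr
    · exact h2
  -- same-row steps move by one
  have hE : ∀ t, t + 1 ≤ n → (y t).1 = (y (t+1)).1 → Nat.dist (y t).2 (y (t+1)).2 = 1 := by
    intro t ht hr
    have ha : (GhatXor u).Adj (y t) (y (t+1)) := by
      rw [hadj t (t+1) (by omega) ht]
      simp [Nat.dist]
    rcases (hadj' _ _).mp ha with ⟨_, h2⟩ | ⟨h1, _⟩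
    · exact h2
    · exact absurd hr h1
  -- far same-row pairs have different positions
  have hF : ∀ j k, j + 2 ≤ k → k ≤ n → (y j).1 = (y k).1 → (y j).2 ≠ (y k).2 := by
    intro j k h2 hk hr hc
    have : y j = y k := Prod.ext hr hc
    have := hinj j k (by omega) hk this
    omega
  -- rows constant on crossing-free intervals
  have hROW : ∀ p q, q ≤ n → (∀ s, p ≤ s → s < q → (y s).1 = (y (s+1)).1) →
      ∀ j, p ≤ j → j ≤ q → (y j).1 = (y p).1 := by
    intro p q hq hs j hpj hjq
    induction j, hpj using Nat.le_induction with
    | base => rfl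
    | succ m hm ih => exact (hs m hm (by omega)).symm.trans (ih (by omega))
  -- constant-color same-row runs are bounded by l
  have hRUN : ∀ p d, p + d ≤ n → (∀ t, t ≤ d → (y (p+t)).1 = (y p).1) →
      (∀ t, t ≤ d → u (y (p+t)).2 = u (y p).2) → d + 1 ≤ l := by
    intro p d hpd hr hc
    have h1 : ∀ t, t < d → Nat.dist ((y (p+t)).2) ((y (p+t+1)).2) = 1 := by
      intro t ht
      exact hE (p+t) (by omega) ((hr t (by omega)).trans (hr (t+1) (by omega)).symm)
    have h2 : ∀ t, t + 2 ≤ d → (y (p+t)).2 ≠ (y (p+t+2)).2 := by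
      intro t ht
      exact hF (p+t) (p+t+2) (by omega) (by omega)
        ((hr t (by omega)).trans (hr (t+2) (by omega)).symm)
    rcases PZwalk (fun t => (y (p+t)).2) d h1 h2 with hup | hdn
    · apply hlmax
      refine ⟨(y p).2, fun t ht => ?_⟩
      have e : (y p).2 + t = (y (p+t)).2 := by
        have := hup t (by omega)
        simpa using this.symm
      rw [e]
      exact hc t (by omega)
    · apply hlmax
      have hs0 : d ≤ (y p).2 := by
        have := hdn d le_rfl
        simp at this
        omega
      refine ⟨(y p).2 - d, fun t ht => ?_⟩
      have e1 : (y p).2 - d + t = (y (p + (d - t))).2 := by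
        have := hdn (d - t) (by omega)
        simp at this
        omega
      have e2 : (y p).2 - d = (y (p + d)).2 := by
        have := hdn d le_rfl
        simp at this
        omega
      rw [e1, e2]
      exact (hc (d-t) (by omega)).trans (hc d le_rfl).symm
  -- MAIN ARGUMENT
  intro j k hj hk
  by_cases hC : ∀ t, t < n → (y t).1 = (y (t+1)).1
  · have hconst := hROW 0 n le_rfl (fun s _ hs => hC s hs)
    exact (hconst j (by omega) hj).trans (hconst k (by omega) hk).symm
  exfalso
  push_neg at hC
  obtain ⟨t0, ht0, hcr0⟩ := hC
  have hex : ∃ t, t < n ∧ (y t).1 ≠ (y (t+1)).1 := ⟨t0, ht0, hcr0⟩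
  -- gap ≥ 3 between consecutive crossings impossible
  have hG3 : ∀ t t', t' < n → (y t).1 ≠ (y (t+1)).1 → (y t').1 ≠ (y (t'+1)).1 →
      (∀ s, t < s → s < t' → (y s).1 = (y (s+1)).1) → t + 3 ≤ t' → False := by
    intro t t' ht'n hct hct' hbet h3
    have hrc := hROW (t+1) t' (by omega) (fun s hs1 hs2 => hbet s (by omega) hs2)
    have hr2 : (y (t+2)).1 = (y (t+1)).1 := hrc (t+2) (by omega) (by omega)
    have hrt' : (y t').1 = (y (t+1)).1 := hrc t' (by omega) le_rfl
    have e1 : u (y t).2 = u (y (t+2)).2 :=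
      hB t (t+2) (by omega) (by omega) (by rw [hr2]; exact hct)
    have e2 : u (y (t+2)).2 = u (y (t'+1)).2 :=
      hB (t+2) (t'+1) (by omega) (by omega) (by rw [hr2, ← hrt']; exact hct')
    have e3 : u (y t).2 = u (y t').2 :=
      hB t t' (by omega) (by omega) (by rw [hrt']; exact hct)
    have e4 : u (y t').2 ≠ u (y (t'+1)).2 := hD t' (by omega) hct'
    exact e4 (e3.symm.trans (e1.trans e2))
  -- crossings at t and t+2 (with no crossing at t+1) impossible
  have hX1 : ∀ t, t + 2 < n → (y t).1 ≠ (y (t+1)).1 → (y (t+1)).1 = (y (t+2)).1 →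
      (y (t+2)).1 ≠ (y (t+3)).1 → False := by
    intro t htn hc1 heq hc2
    have d1 : u (y t).2 ≠ u (y (t+1)).2 := hD t (by omega) hc1
    have d2 : u (y (t+2)).2 ≠ u (y (t+3)).2 := hD (t+2) (by omega) hc2
    have ceq : u (y t).2 = u (y (t+2)).2 :=
      hB t (t+2) (by omega) (by omega) (by rw [← heq]; exact hc1)
    have hleft : ∀ w, w + 2 ≤ t + 1 → (y w).1 = (y (t+1)).1 := by
      intro w hw
      by_contra hne
      have hA := hB w (t+1) hw (by omega) hne
      have hne2 : (y w).1 ≠ (y (t+2)).1 := by rw [← heq]; exact hne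
      have hA2 := hB w (t+2) (by omega) (by omega) hne2
      exact d1 (ceq.trans (hA2.symm.trans hA))
    have hright : ∀ w, t + 4 ≤ w → w ≤ n → (y w).1 = (y (t+1)).1 := by
      intro w hw1 hw2
      by_contra hne
      have hA := hB (t+1) w (by omega) hw2 (fun hh => hne hh.symm)
      have hA2 := hB (t+2) w (by omega) hw2 (fun hh => hne (heq.trans hh).symm)
      exact d1 (ceq.trans (hA2.trans hA.symm))
    have ht1 : t ≤ 1 := by
      by_contra h
      push_neg at h
      have hw : (y (t-2)).1 = (y (t+1)).1 := hleft (t-2) (by omega)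
      have ha : u (y (t-2)).2 = u (y t).2 :=
        hB (t-2) t (by omega) (by omega) (by rw [hw]; exact fun hh => hc1 hh.symm)
      have hb : u (y (t-2)).2 = u (y (t+3)).2 :=
        hB (t-2) (t+3) (by omega) (by omega)
          (by rw [hw]; exact fun hh => hc2 (heq.symm.trans hh))
      exact d2 (ceq.symm.trans (ha.symm.trans hb))
    have htn5 : n ≤ t + 4 := by
      by_contra h
      push_neg at h
      have hw : (y (t+5)).1 = (y (t+1)).1 := hright (t+5) (by omega) (by omega)
      have ha : u (y t).2 = u (y (t+5)).2 :=
        hB t (t+5) (by omega) (by omega) (by rw [hw]; exact hc1)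
      have hb : u (y (t+3)).2 = u (y (t+5)).2 :=
        hB (t+3) (t+5) (by omega) (by omega)
          (by rw [hw, heq]; exact fun hh => hc2 hh.symm)
      exact d2 (ceq.symm.trans (ha.trans hb.symm))
    omega
  -- five consecutive crossings impossible
  have hX2a : ∀ t, t + 4 < n → (∀ s, s ≤ 4 → (y (t+s)).1 ≠ (y (t+s+1)).1) → False := by
    intro t htn hcr
    have g0 : (y t).1 ≠ (y (t+1)).1 := hcr 0 (by omega)
    have g1 : (y (t+1)).1 ≠ (y (t+2)).1 := hcr 1 (by omega)
    have g2 : (y (t+2)).1 ≠ (y (t+3)).1 := hcr 2 (by omega)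
    have g3 : (y (t+3)).1 ≠ (y (t+4)).1 := hcr 3 (by omega)
    have g4 : (y (t+4)).1 ≠ (y (t+5)).1 := hcr 4 (by omega)
    have e1 := hD t (by omega) g0
    have e2 := hD (t+1) (by omega) g1
    have e3 := hD (t+2) (by omega) g2
    have e4 := hD (t+3) (by omega) g3
    have e5 := hD (t+4) (by omega) g4
    have c02 : u (y t).2 = u (y (t+2)).2 := PZbool3 e1 e2
    have n03 : u (y t).2 ≠ u (y (t+3)).2 := fun hh => e3 (c02.symm.trans hh)
    have r03 : (y t).1 = (y (t+3)).1 := hB' t (t+3) (by omega) (by omega) n03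
    have c24 : u (y (t+2)).2 = u (y (t+4)).2 := PZbool3 e3 e4
    have c04 : u (y t).2 = u (y (t+4)).2 := c02.trans c24
    have n05 : u (y t).2 ≠ u (y (t+5)).2 := fun hh => e5 (c04.symm.trans hh)
    have r05 : (y t).1 = (y (t+5)).1 := hB' t (t+5) (by omega) (by omega) n05
    have n25 : u (y (t+2)).2 ≠ u (y (t+5)).2 := fun hh => e5 (c24.symm.trans hh)
    have r25 : (y (t+2)).1 = (y (t+5)).1 := hB' (t+2) (t+5) (by omega) (by omega) n25
    exact g2 ((r25.trans r05.symm).trans r03)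
  -- three consecutive crossings impossible
  have hX2 : ¬ ∃ t, t + 2 < n ∧ (y t).1 ≠ (y (t+1)).1 ∧ (y (t+1)).1 ≠ (y (t+2)).1 ∧
      (y (t+2)).1 ≠ (y (t+3)).1 := by
    intro hex3
    obtain ⟨hmn, g0, g1, g2⟩ := Nat.find_spec hex3
    set m := Nat.find hex3 with hmdef
    have d0 := hD m (by omega) g0
    have d1 := hD (m+1) (by omega) g1
    have d2 := hD (m+2) (by omega) g2
    have c02 : u (y m).2 = u (y (m+2)).2 := PZbool3 d0 d1
    have n03 : u (y m).2 ≠ u (y (m+3)).2 := fun hh => d2 (c02.symm.trans hh)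
    have r03 : (y m).1 = (y (m+3)).1 := hB' m (m+3) (by omega) (by omega) n03
    have hm0 : m = 0 := by
      by_contra h
      have hm1 : 1 ≤ m := by omega
      by_cases hc : (y (m-1)).1 ≠ (y m).1
      · have e1 : m - 1 + 1 = m := by omega
        have e2 : m - 1 + 2 = m + 1 := by omega
        have e3 : m - 1 + 3 = m + 2 := by omega
        exact Nat.find_min hex3 (show m - 1 < m by omega)
          ⟨by omega, by rw [e1]; exact hc, by rw [e1, e2]; exact g0, by rw [e2, e3]; exact g1⟩
      · push_neg at hc
        have h1 : u (y (m-1)).2 = u (y (m+1)).2 :=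
          hB (m-1) (m+1) (by omega) (by omega) (by rw [hc]; exact g0)
        have h2 : u (y (m-1)).2 = u (y (m+2)).2 :=
          hB (m-1) (m+2) (by omega) (by omega)
            (by rw [hc]; exact fun hh => g2 (hh.symm.trans r03))
        exact d1 (h1.symm.trans h2)
    by_cases h3 : (y (m+3)).1 ≠ (y (m+4)).1
    · by_cases h4 : (y (m+4)).1 ≠ (y (m+5)).1
      · refine hX2a m (by omega) ?_
        intro s hs
        interval_cases s
        · exact g0
        · exact g1
        · exact g2
        · exact h3
        · exact h4
      · push_neg at h4
        have d3 := hD (m+3) (by omega) h3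
        have c13 : u (y (m+1)).2 = u (y (m+3)).2 := PZbool3 d1 d2
        have n14 : u (y (m+1)).2 ≠ u (y (m+4)).2 := fun hh => d3 (c13.symm.trans hh)
        have r14 : (y (m+1)).1 = (y (m+4)).1 := hB' (m+1) (m+4) (by omega) (by omega) n14
        have h5a : u (y (m+2)).2 = u (y (m+5)).2 :=
          hB (m+2) (m+5) (by omega) (by omega) (by rw [← h4, ← r14]; exact g1.symm)
        have h5b : u (y (m+3)).2 = u (y (m+5)).2 :=
          hB (m+3) (m+5) (by omega) (by omega) (by rw [← h4, ← r14, ← r03]; exact g0)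
        exact d2 (h5a.trans h5b.symm)
    · push_neg at h3
      have h4a : u (y (m+1)).2 = u (y (m+4)).2 :=
        hB (m+1) (m+4) (by omega) (by omega) (by rw [← h3, ← r03]; exact g0.symm)
      have h4b : u (y (m+2)).2 = u (y (m+4)).2 :=
        hB (m+2) (m+4) (by omega) (by omega) (by rw [← h3]; exact g2)
      exact d1 (h4a.trans h4b.symm)
  -- minimal crossing i
  obtain ⟨hin, hcri⟩ := Nat.find_spec hex
  set i := Nat.find hex with hidef
  have himin : ∀ s, s < i → (y s).1 = (y (s+1)).1 := by
    intro s hs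
    by_contra hne
    exact Nat.find_min hex hs ⟨by omega, hne⟩
  have hL : ∀ w, w ≤ i → (y w).1 = (y i).1 := by
    intro w hw
    have h0 := hROW 0 i (by omega) (fun s _ hs => himin s hs)
    exact (h0 w (by omega) hw).trans (h0 i (by omega) le_rfl).symm
  have dA : u (y i).2 ≠ u (y (i+1)).2 := hD i (by omega) hcri
  have hcl : ∀ w, w + 2 ≤ i + 1 → u (y w).2 = u (y (i+1)).2 := by
    intro w hw
    exact hB w (i+1) hw (by omega) (by rw [hL w (by omega)]; exact hcri)
  have hil : i ≤ l := by
    rcases Nat.eq_zero_or_pos i with h0 | h0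
    · omega
    · have := hRUN 0 (i-1) (by omega)
        (fun t ht => by
          simpa using (hL t (by omega)).trans (hL 0 (by omega)).symm)
        (fun t ht => by
          simpa using (hcl t (by omega)).trans (hcl 0 (by omega)).symm)
      omega
  by_cases hQ : ∃ t, i < t ∧ t < n ∧ (y t).1 ≠ (y (t+1)).1
  · obtain ⟨hii', hi'n, hcri'⟩ := Nat.find_spec hQ
    set i' := Nat.find hQ with hi'def
    have hbet : ∀ s, i < s → s < i' → (y s).1 = (y (s+1)).1 := by
      intro s h1 h2
      by_contra hne
      exact Nat.find_min hQ h2 ⟨h1, by omega, hne⟩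
    have hle : i' ≤ i + 2 := by
      by_contra hgt
      exact hG3 i i' hi'n hcri hcri' hbet (by omega)
    have hcase : i' = i + 1 ∨ i' = i + 2 := by omega
    rcases hcase with hc' | hc'
    · -- crossings at i, i+1
      rw [hc'] at hcri' hi'n
      by_cases hQ2 : ∃ t, i + 1 < t ∧ t < n ∧ (y t).1 ≠ (y (t+1)).1
      · obtain ⟨hii'', hi''n, hcri''⟩ := Nat.find_spec hQ2
        set i'' := Nat.find hQ2 with hi''def
        have hbet2 : ∀ s, i + 1 < s → s < i'' → (y s).1 = (y (s+1)).1 := by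
          intro s h1 h2
          by_contra hne
          exact Nat.find_min hQ2 h2 ⟨h1, by omega, hne⟩
        have hle2 : i'' ≤ i + 3 := by
          by_contra hgt
          exact hG3 (i+1) i'' hi''n hcri' hcri'' hbet2 (by omega)
        have hcase2 : i'' = i + 2 ∨ i'' = i + 3 := by omega
        rcases hcase2 with hc'' | hc''
        · rw [hc''] at hcri'' hi''n
          exact hX2 ⟨i, by omega, hcri, hcri', hcri''⟩
        · rw [hc''] at hcri'' hi''n
          exact hX1 (i+1) (by omega) hcri' (hbet2 (i+2) (by omega) (by omega)) hcri''
      · push_neg at hQ2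
        have hR2 : ∀ w, i + 2 ≤ w → w ≤ n → (y w).1 = (y (i+2)).1 :=
          hROW (i+2) n le_rfl (fun s hs1 hs2 => hQ2 s (by omega) hs2)
        by_cases hTR : (y (i+2)).1 = (y i).1
        · have hcrR : ∀ w, i + 3 ≤ w → w ≤ n → u (y (i+1)).2 = u (y w).2 := by
            intro w h1 h2
            exact hB (i+1) w (by omega) h2
              (by rw [hR2 w (by omega) h2, hTR]; exact fun hh => hcri hh.symm)
          have hnr : n ≤ i + 2 + l := by
            rcases le_or_gt (i+3) n with h3 | h3
            · have := hRUN (i+3) (n - (i+3)) (by omega)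
                (fun t ht => (hR2 (i+3+t) (by omega) (by omega)).trans
                  (hR2 (i+3) (by omega) (by omega)).symm)
                (fun t ht => (hcrR (i+3+t) (by omega) (by omega)).symm.trans
                  (hcrR (i+3) (by omega) (by omega)))
              omega
            · omega
          omega
        · have hc2i : u (y i).2 = u (y (i+2)).2 :=
            hB i (i+2) (by omega) (by omega) (fun hh => hTR hh.symm)
          have hni2 : n ≤ i + 2 := by
            by_contra hgt
            have ha : u (y i).2 = u (y (i+3)).2 :=
              hB i (i+3) (by omega) (by omega)
                (by rw [hR2 (i+3) (by omega) (by omega)]; exact fun hh => hTR hh.symm)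
            have hb : u (y (i+1)).2 = u (y (i+3)).2 :=
              hB (i+1) (i+3) (by omega) (by omega)
                (by rw [hR2 (i+3) (by omega) (by omega)]; exact hcri')
            exact dA (ha.trans hb.symm)
          have hi0 : i = 0 := by
            by_contra hne0
            have e : (y (i-1)).1 = (y i).1 := hL (i-1) (by omega)
            have ha : u (y (i-1)).2 = u (y (i+1)).2 :=
              hB (i-1) (i+1) (by omega) (by omega) (by rw [e]; exact hcri)
            have hb : u (y (i-1)).2 = u (y (i+2)).2 :=
              hB (i-1) (i+2) (by omega) (by omega) (by rw [e]; exact fun hh => hTR hh.symm)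
            exact dA (hc2i.trans (hb.symm.trans ha))
          omega
    · -- crossings at i and i+2 : impossible
      rw [hc'] at hcri' hi'n
      exact hX1 i (by omega) hcri (hbet (i+1) (by omega) (by omega)) hcri'
  · -- single crossing i
    push_neg at hQ
    have hR2 : ∀ w, i + 1 ≤ w → w ≤ n → (y w).1 = (y (i+1)).1 :=
      hROW (i+1) n le_rfl (fun s hs1 hs2 => hQ s (by omega) hs2)
    have hcrR : ∀ w, i + 2 ≤ w → w ≤ n → u (y i).2 = u (y w).2 := by
      intro w h1 h2
      exact hB i w (by omega) h2 (by rw [hR2 w (by omega) h2]; exact hcri)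
    have hnr : n ≤ i + 1 + l := by
      rcases le_or_gt (i+2) n with h3 | h3
      · have := hRUN (i+2) (n - (i+2)) (by omega)
          (fun t ht => (hR2 (i+2+t) (by omega) (by omega)).trans
            (hR2 (i+2) (by omega) (by omega)).symm)
          (fun t ht => (hcrR (i+2+t) (by omega) (by omega)).symm.trans
            (hcrR (i+2) (by omega) (by omega)))
        omega
      · omega
    omega

theorem long_induced_path_in_GhatXor_in_one_component
    (u : ℕ → Bool) (hur : UniformlyRecurrent u) (hnc : ∃ m n : ℕ, u m ≠ u n)
    (l : ℕ) (hl : HasConstFactor u l) (hlmax : ∀ m, HasConstFactor u m → m ≤ l)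
    {n : ℕ} (hn : (if l = 1 then 6 else 2 * (l + 1) + 1) ≤ n)
    (x : Fin (n + 1) → ℕ × ℕ) (hx : IsInducedPath (GhatXor u) x) :
    ∀ i j : Fin (n + 1), (x i).1 = (x j).1 := by
  have hl1 : 1 ≤ l := hlmax 1 ⟨0, by
    intro t ht
    have : t = 0 := by omega
    subst this
    rfl⟩
  have hn6 : 6 ≤ n := by
    by_cases h : l = 1
    · rw [if_pos h] at hn; exact hn
    · rw [if_neg h] at hn; omega
  have hn2l : 2 * l + 3 ≤ n := by
    by_cases h : l = 1
    · rw [if_pos h] at hn; omega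
    · rw [if_neg h] at hn; omega
  intro i j
  set y : ℕ → ℕ × ℕ := fun m => x ⟨min m n, by omega⟩ with hydef
  have hy : ∀ m, (hm : m ≤ n) → y m = x ⟨m, by omega⟩ := by
    intro m hm
    simp [hydef, Nat.min_eq_left hm]
  have hinj : ∀ a b, a ≤ n → b ≤ n → y a = y b → a = b := by
    intro a b ha hb he
    rw [hy a ha, hy b hb] at he
    exact congrArg Fin.val (hx.1 he)
  have hadj : ∀ a b, a ≤ n → b ≤ n → ((GhatXor u).Adj (y a) (y b) ↔ Nat.dist a b = 1) := by
    intro a b ha hb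
    rw [hy a ha, hy b hb]
    exact hx.2 ⟨a, by omega⟩ ⟨b, by omega⟩
  have main := PZaux u l n hl1 hlmax hn6 hn2l y hinj hadj i.val j.val i.is_le j.is_le
  rw [hy i.val i.is_le, hy j.val j.is_le] at main
  simpa using main
end

section
/- Let u, u' : ℕ → {0,1} be uniformly recurrent non-constant words whose factor sets are nonequivalent, i.e., fac(u) is not equal to any of fac(u'), fac(u')^d, fac(u') ∔ 1, and (fac(u'))^d ∔ 1. Then the ages of the graphs Ĝ_{u,⊕} and Ĝ_{u',⊕} are incomparable with respect to inclusion (neither is contained in the other), and likewise the ages of Ĝ_{u,π₂} and Ĝ_{u',π₂} are incomparable with respect to inclusion. -/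
open SimpleGraph

namespace IncompAux

/-- The window of `u` at position `p` of length `n`. -/
def fac (u : ℕ → Bool) (p n : ℕ) : List Bool := (List.range n).map fun i => u (p + i)

@[simp] lemma fac_length (u : ℕ → Bool) (p n : ℕ) : (fac u p n).length = n := by
  simp [fac]

lemma fac_getElem (u : ℕ → Bool) (p n i : ℕ) (h : i < (fac u p n).length) :
    (fac u p n)[i] = u (p + i) := by
  simp [fac]

lemma isFactor_iff (u : ℕ → Bool) (w : List Bool) :
    IsFactor u w ↔ ∃ p, w = fac u p w.length := Iff.rfl

lemma isFactor_fac (u : ℕ → Bool) (p n : ℕ) : IsFactor u (fac u p n) :=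
  ⟨p, by rw [fac_length]; rfl⟩

lemma fac_drop (u : ℕ → Bool) (p n k : ℕ) :
    (fac u p n).drop k = fac u (p + k) (n - k) := by
  apply List.ext_getElem
  · simp [fac]
  · intro i h1 h2
    rw [List.getElem_drop, fac_getElem, fac_getElem]
    congr 1
    omega

lemma fac_take (u : ℕ → Bool) (p n k : ℕ) :
    (fac u p n).take k = fac u p (min k n) := by
  rw [fac, fac, ← List.map_take, List.take_range]

lemma isFactor_infix {u : ℕ → Bool} {w v : List Bool} (hw : IsFactor u w)
    (hv : v <:+: w) : IsFactor u v := by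
  obtain ⟨p, hw'⟩ := hw
  obtain ⟨s, t, hst⟩ := hv
  have hw2 : w = fac u p w.length := hw'
  have hwl : w.length = s.length + v.length + t.length := by
    rw [← hst]; simp; omega
  have hst2 : s ++ (v ++ t) = fac u p w.length := by
    rw [← hw2, ← hst]; simp
  refine ⟨p + s.length, ?_⟩
  have h1 : (fac u p w.length).drop s.length = v ++ t := by
    rw [← hst2]
    have := List.drop_append (l₁ := s) (l₂ := v ++ t) (i := s.length)
    simpa using this
  have h2 : v = ((fac u p w.length).drop s.length).take v.length := by
    rw [h1, List.take_left]
  rw [fac_drop, fac_take] at h2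
  have h3 : min v.length (w.length - s.length) = v.length := by omega
  rw [h3] at h2
  exact h2

lemma fac_prefix (u : ℕ → Bool) (p : ℕ) {n n' : ℕ} (h : n ≤ n') :
    fac u p n <+: fac u p n' := by
  refine ⟨fac u (p + n) (n' - n), ?_⟩
  apply List.ext_getElem
  · simp only [List.length_append, fac_length]; omega
  · intro i h1 h2
    rw [fac_getElem]
    by_cases hi : i < n
    · rw [List.getElem_append_left (by simpa using hi), fac_getElem]
    · rw [List.getElem_append_right (by simpa using hi)]
      rw [fac_getElem]
      simp only [fac_length]
      congr 1
      omega

lemma singleton_isFactor (u : ℕ → Bool) (k : ℕ) : IsFactor u [u k] := by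
  refine ⟨k, ?_⟩
  simp [List.range_succ]

/-- window property : every window of length m contains the letter b. -/
def WindowProp (u : ℕ → Bool) (m : ℕ) : Prop :=
  ∀ p : ℕ, ∀ b : Bool, ∃ i < m, u (p + i) = b

lemma windowProp_mono {u : ℕ → Bool} {m m' : ℕ} (h : WindowProp u m) (hm : m ≤ m') :
    WindowProp u m' := by
  intro p b
  obtain ⟨i, hi, hb⟩ := h p b
  exact ⟨i, lt_of_lt_of_le hi hm, hb⟩

lemma exists_windowProp {u : ℕ → Bool} (hur : UniformlyRecurrent u)
    (hnc : ∃ m n : ℕ, u m ≠ u n) : ∃ m, 3 ≤ m ∧ WindowProp u m := by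
  obtain ⟨m, hm⟩ := hur 1
  refine ⟨max m 3, le_max_right _ _, windowProp_mono ?_ (le_max_left _ _)⟩
  intro p b
  have hb : ∃ k, u k = b := by
    obtain ⟨m1, n1, hne⟩ := hnc
    by_cases hh : u m1 = b
    · exact ⟨m1, hh⟩
    · exact ⟨n1, by cases b <;> cases hm1 : u m1 <;> cases hn1 : u n1 <;> simp_all⟩
  obtain ⟨k, hk⟩ := hb
  have h1 : IsFactor u [u k] := singleton_isFactor u k
  have h2 : IsFactor u (fac u p m) := isFactor_fac u p m
  have h3 : [u k] <:+: fac u p m := hm [u k] (fac u p m) h1 h2 (by simp) (by simp)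
  have h4 : u k ∈ fac u p m := by
    have := h3.subset
    simp at this
    exact this
  simp only [fac, List.mem_map, List.mem_range] at h4
  obtain ⟨i, hi, hui⟩ := h4
  exact ⟨i, hi, by rw [hui, hk]⟩

/-- From an "all factors transfer" hypothesis, factor sets coincide (up to op). -/
lemma closure_lemma {u u' : ℕ → Bool} (hur' : UniformlyRecurrent u')
    (op : List Bool → List Bool)
    (hop_len : ∀ w : List Bool, (op w).length = w.length)
    (hop_inv : ∀ w : List Bool, op (op w) = w)
    (hop_inf : ∀ {a b : List Bool}, a <:+: b → op a <:+: op b)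
    (hall : ∀ w, IsFactor u w → IsFactor u' (op w)) :
    {w : List Bool | IsFactor u w} = op '' {w : List Bool | IsFactor u' w} := by
  ext w
  simp only [Set.mem_setOf_eq, Set.mem_image]
  constructor
  · intro hw
    exact ⟨op w, hall w hw, hop_inv w⟩
  · rintro ⟨w', hw', rfl⟩
    obtain ⟨m, hm⟩ := hur' w'.length
    have hv : IsFactor u' (op (fac u 0 m)) := hall _ (isFactor_fac u 0 m)
    have hinfix : w' <:+: op (fac u 0 m) :=
      hm w' (op (fac u 0 m)) hw' hv rfl (by rw [hop_len, fac_length])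
    have : op w' <:+: op (op (fac u 0 m)) := hop_inf hinfix
    rw [hop_inv] at this
    exact isFactor_infix (isFactor_fac u 0 m) this

end IncompAux

namespace IncompAux

lemma dist_def (a b : ℕ) : Nat.dist a b = a - b + (b - a) := rfl

lemma ghatXor_adj (v : ℕ → Bool) (a b : ℕ × ℕ) :
    (GhatXor v).Adj a b ↔
      ((a.1 = b.1 ∧ Nat.dist a.2 b.2 = 1) ∨ (a.1 ≠ b.1 ∧ v a.2 ≠ v b.2)) := Iff.rfl

lemma ghatPi2_adj (v : ℕ → Bool) (a b : ℕ × ℕ) :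
    (GhatPi2 v).Adj a b ↔
      ((a.1 = b.1 ∧ Nat.dist a.2 b.2 = 1) ∨
        (a.1 < b.1 ∧ v b.2 = true) ∨ (b.1 < a.1 ∧ v a.2 = true)) := Iff.rfl

/-- A sequence of naturals with consecutive distance 1 and injective is monotone. -/
lemma mono_aux (c : ℕ → ℕ) (a len : ℕ)
    (hinj : ∀ i < len, ∀ j < len, c (a + i) = c (a + j) → i = j)
    (hstep : ∀ i, i + 1 < len → Nat.dist (c (a + i)) (c (a + i + 1)) = 1) :
    (∀ i < len, c (a + i) = c a + i) ∨ (∀ i < len, c (a + i) + i = c a) := by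
  rcases le_or_gt len 1 with hlen | hlen
  · left; intro i hi
    have : i = 0 := by omega
    subst this; simp
  have h01 := hstep 0 (by omega)
  rw [dist_def] at h01
  have ha0 : a + 0 = a := by omega
  rw [ha0] at h01
  rcases Nat.lt_or_ge (c a) (c (a + 1)) with hd | hd
  · -- increasing
    left
    intro i
    induction i using Nat.strong_induction_on with
    | _ i ih =>
      intro hi
      match i with
      | 0 => simp
      | 1 => omega
      | (k + 2) =>
        have hk := ih k (by omega) (by omega)
        have hk1 := ih (k + 1) (by omega) (by omega)
        have hs := hstep (k + 1) (by omega)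
        rw [dist_def] at hs
        rcases Nat.lt_or_ge (c (a + (k + 1))) (c (a + (k + 1) + 1)) with h | h
        · have : a + (k + 1) + 1 = a + (k + 2) := by omega
          rw [this] at hs h
          omega
        · exfalso
          have heq : c (a + (k + 2)) = c (a + k) := by
            have : a + (k + 1) + 1 = a + (k + 2) := by omega
            rw [this] at hs h
            omega
          have := hinj (k + 2) hi k (by omega) heq
          omega
  · -- decreasing
    right
    intro i
    induction i using Nat.strong_induction_on with
    | _ i ih =>
      intro hi
      match i with
      | 0 => simp
      | 1 => omega
      | (k + 2) =>
        have hk := ih k (by omega) (by omega)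
        have hk1 := ih (k + 1) (by omega) (by omega)
        have hs := hstep (k + 1) (by omega)
        rw [dist_def] at hs
        have hix : a + (k + 1) + 1 = a + (k + 2) := by omega
        rw [hix] at hs
        rcases Nat.lt_or_ge (c (a + (k + 1))) (c (a + (k + 2))) with h | h
        · exfalso
          have heq : c (a + (k + 2)) = c (a + k) := by omega
          have := hinj (k + 2) hi k (by omega) heq
          omega
        · omega

/-- Selection of a vertex with prescribed letter, far from two given indices. -/
lemma find_in_window (lam : ℕ → Bool) (m n : ℕ)
    (hwin : ∀ a, a + (m + 2) ≤ n → ∀ b : Bool, ∃ i, a ≤ i ∧ i < a + (m + 2) ∧ lam i = b)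
    (hn : 3 * m + 12 ≤ n) (b : Bool) (e₁ e₂ : ℕ) :
    ∃ k < n, lam k = b ∧ 2 ≤ Nat.dist k e₁ ∧ 2 ≤ Nat.dist k e₂ := by
  have key : ∀ f₁ f₂ : ℕ, f₁ ≤ f₂ → ∃ k < n, lam k = b ∧ 2 ≤ Nat.dist k f₁ ∧ 2 ≤ Nat.dist k f₂ := by
    intro f₁ f₂ h12
    by_cases hc1 : m + 4 ≤ f₁
    · obtain ⟨i, hi1, hi2, hib⟩ := hwin 0 (by omega) b
      exact ⟨i, by omega, hib, by rw [dist_def]; omega, by rw [dist_def]; omega⟩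
    · by_cases hc2 : f₁ + m + 5 ≤ f₂
      · obtain ⟨i, hi1, hi2, hib⟩ := hwin (f₁ + 2) (by omega) b
        exact ⟨i, by omega, hib, by rw [dist_def]; omega, by rw [dist_def]; omega⟩
      · obtain ⟨i, hi1, hi2, hib⟩ := hwin (f₂ + 2) (by omega) b
        exact ⟨i, by omega, hib, by rw [dist_def]; omega, by rw [dist_def]; omega⟩
  rcases le_total e₁ e₂ with h | h
  · exact key e₁ e₂ h
  · obtain ⟨k, h1, h2, h3, h4⟩ := key e₂ e₁ h
    exact ⟨k, h1, h2, h4, h3⟩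

/-- A window of the path on which the letters are constant yields a constant
factor of `v`, contradicting the window property. -/
lemma const_window_absurd (v : ℕ → Bool) (m : ℕ) (hm : WindowProp v m)
    (z : ℕ → ℕ × ℕ) (n : ℕ)
    (hinj : ∀ i < n, ∀ j < n, z i = z j → i = j)
    (a : ℕ) (ha : a + (m + 2) ≤ n) (bb : Bool)
    (hconst : ∀ i, a ≤ i → i < a + (m + 2) → v (z i).2 = bb)
    (hH : ∀ i, a ≤ i → i + 1 < a + (m + 2) →
      (z i).1 = (z (i + 1)).1 ∧ Nat.dist (z i).2 (z (i + 1)).2 = 1) : False := by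
  -- rows are constant on the window
  have hrow : ∀ d, d < m + 2 → (z (a + d)).1 = (z a).1 := by
    intro d
    induction d with
    | zero => intro _; rfl
    | succ k ih =>
      intro hd
      have hk := ih (by omega)
      have := (hH (a + k) (by omega) (by omega)).1
      have hx : a + k + 1 = a + (k + 1) := by omega
      rw [hx] at this
      rw [← this, hk]
  -- columns are monotone on the window
  have hcinj : ∀ i < m + 2, ∀ j < m + 2, (z (a + i)).2 = (z (a + j)).2 → i = j := by
    intro i hi j hj hc
    have hri : (z (a + i)).1 = (z (a + j)).1 := by rw [hrow i hi, hrow j hj]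
    have : z (a + i) = z (a + j) := Prod.ext hri hc
    have := hinj (a + i) (by omega) (a + j) (by omega) this
    omega
  have hstep : ∀ i, i + 1 < m + 2 → Nat.dist ((z (a + i)).2) ((z (a + i + 1)).2) = 1 := by
    intro i hi
    have := (hH (a + i) (by omega) (by omega)).2
    exact this
  rcases mono_aux (fun j => (z j).2) a (m + 2) hcinj hstep with hmono | hmono
  · obtain ⟨i, him, hib⟩ := hm (z a).2 (!bb)
    have h1 : v ((z (a + i)).2) = bb := hconst (a + i) (by omega) (by omega)
    have h2 : (z (a + i)).2 = (z a).2 + i := hmono i (by omega)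
    rw [h2] at h1
    rw [h1] at hib
    simp at hib
  · -- decreasing case
    have htop := hmono (m + 1) (by omega)
    set p := (z (a + (m + 1))).2 with hp
    obtain ⟨i, him, hib⟩ := hm p (!bb)
    have hji : (z (a + (m + 1 - i))).2 + (m + 1 - i) = (z a).2 := hmono (m + 1 - i) (by omega)
    have hpi : p + i = (z (a + (m + 1 - i))).2 := by omega
    have h1 : v ((z (a + (m + 1 - i))).2) = bb := hconst (a + (m + 1 - i)) (by omega) (by omega)
    rw [← hpi] at h1
    rw [h1] at hib
    simp at hib

end IncompAux

namespace IncompAux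

lemma xor_path (v : ℕ → Bool) (m : ℕ) (hm : WindowProp v m)
    (z : ℕ → ℕ × ℕ) (n : ℕ) (hn : 3 * m + 12 ≤ n)
    (hinj : ∀ i < n, ∀ j < n, z i = z j → i = j)
    (hadj : ∀ i < n, ∀ j < n, ((GhatXor v).Adj (z i) (z j) ↔ Nat.dist i j = 1)) :
    ∃ R c₀, (∀ i < n, (z i).1 = R) ∧
      ((∀ i < n, (z i).2 = c₀ + i) ∨ (n ≤ c₀ + 1 ∧ ∀ i < n, (z i).2 + i = c₀)) := by
  -- far vertices with different letters are in the same row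
  have s1 : ∀ i < n, ∀ j < n, 2 ≤ Nat.dist i j → v (z i).2 ≠ v (z j).2 →
      (z i).1 = (z j).1 := by
    intro i hi j hj hfar hlet
    have hna : ¬ (GhatXor v).Adj (z i) (z j) := by
      rw [hadj i hi j hj]; omega
    by_contra hne
    exact hna (Or.inr ⟨hne, hlet⟩)
  -- every window of the path contains both letters
  have s2 : ∀ a, a + (m + 2) ≤ n → ∀ b : Bool,
      ∃ i, a ≤ i ∧ i < a + (m + 2) ∧ v (z i).2 = b := by
    intro a ha b
    by_contra hcon
    push_neg at hcon
    have hconst : ∀ i, a ≤ i → i < a + (m + 2) → v (z i).2 = !b := by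
      intro i h1 h2
      have := hcon i h1 h2
      cases hx : v (z i).2 <;> cases b <;> simp_all
    have hH : ∀ i, a ≤ i → i + 1 < a + (m + 2) →
        (z i).1 = (z (i + 1)).1 ∧ Nat.dist (z i).2 (z (i + 1)).2 = 1 := by
      intro i h1 h2
      have hAdj : (GhatXor v).Adj (z i) (z (i + 1)) := by
        rw [hadj i (by omega) (i + 1) (by omega), dist_def]; omega
      rcases hAdj with ⟨ha1, ha2⟩ | ⟨ha1, ha2⟩
      · exact ⟨ha1, ha2⟩
      · exfalso
        rw [hconst i h1 (by omega), hconst (i + 1) (by omega) h2] at ha2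
        exact ha2 rfl
    exact const_window_absurd v m hm z n hinj a ha (!b) hconst hH
  -- far selection
  have s3 : ∀ (b : Bool) (e₁ e₂ : ℕ), ∃ k < n, v (z k).2 = b ∧
      2 ≤ Nat.dist k e₁ ∧ 2 ≤ Nat.dist k e₂ :=
    fun b e₁ e₂ => find_in_window (fun i => v (z i).2) m n s2 hn b e₁ e₂
  -- same letter ⟹ same row
  have hsame : ∀ i < n, ∀ j < n, v (z i).2 = v (z j).2 → (z i).1 = (z j).1 := by
    intro i hi j hj hlet
    obtain ⟨k, hk, hkb, hk1, hk2⟩ := s3 (!(v (z i).2)) i j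
    have hne1 : v (z i).2 ≠ v (z k).2 := by rw [hkb]; simp
    have hne2 : v (z j).2 ≠ v (z k).2 := by rw [hkb, ← hlet]; simp
    have e1 := s1 i hi k hk (by rwa [Nat.dist_comm]) hne1
    have e2 := s1 j hj k hk (by rwa [Nat.dist_comm]) hne2
    rw [e1, e2]
  -- all rows are equal
  have hall : ∀ i < n, ∀ j < n, (z i).1 = (z j).1 := by
    intro i hi j hj
    by_cases hlet : v (z i).2 = v (z j).2
    · exact hsame i hi j hj hlet
    · obtain ⟨k, hk, hkb, hk1, hk2⟩ := s3 (v (z i).2) j j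
      have e1 := hsame i hi k hk (by rw [hkb])
      have e2 := s1 j hj k hk (by rwa [Nat.dist_comm]) (by rw [hkb]; exact fun h => hlet h.symm)
      rw [e1, ← e2]
  have hn0 : 0 < n := by omega
  -- horizontal steps
  have hstep : ∀ i, i + 1 < n → Nat.dist ((z i).2) ((z (i + 1)).2) = 1 := by
    intro i hi
    have hAdj : (GhatXor v).Adj (z i) (z (i + 1)) := by
      rw [hadj i (by omega) (i + 1) (by omega), dist_def]; omega
    rcases hAdj with ⟨_, ha2⟩ | ⟨ha1, _⟩
    · exact ha2
    · exact absurd (hall i (by omega) (i + 1) (by omega)) ha1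
  have hcinj : ∀ i < n, ∀ j < n, (z (0 + i)).2 = (z (0 + j)).2 → i = j := by
    intro i hi j hj hc
    simp only [Nat.zero_add] at hc
    have hri : (z i).1 = (z j).1 := hall i hi j hj
    have := hinj i hi j hj (Prod.ext hri hc)
    exact this
  have hstep0 : ∀ i, i + 1 < n → Nat.dist ((z (0 + i)).2) ((z (0 + i + 1)).2) = 1 := by
    intro i hi
    simp only [Nat.zero_add]
    exact hstep i hi
  rcases mono_aux (fun j => (z j).2) 0 n hcinj hstep0 with hmono | hmono
  · refine ⟨(z 0).1, (z 0).2, fun i hi => hall i hi 0 hn0, Or.inl ?_⟩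
    intro i hi
    have := hmono i hi
    simpa using this
  · refine ⟨(z 0).1, (z 0).2, fun i hi => hall i hi 0 hn0, Or.inr ⟨?_, ?_⟩⟩
    · have := hmono (n - 1) (by omega)
      omega
    · intro i hi
      have := hmono i hi
      simpa using this

end IncompAux

namespace IncompAux

lemma pi2_path (v : ℕ → Bool) (m : ℕ) (hm : WindowProp v m) (hm3 : 3 ≤ m)
    (z : ℕ → ℕ × ℕ) (n : ℕ) (hn : 3 * m + 12 ≤ n)
    (hinj : ∀ i < n, ∀ j < n, z i = z j → i = j)
    (hadj : ∀ i < n, ∀ j < n, ((GhatPi2 v).Adj (z i) (z j) ↔ Nat.dist i j = 1)) :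
    ∃ R c₀, (∀ i < n, (z i).1 = R) ∧
      ((∀ i < n, (z i).2 = c₀ + i) ∨ (n ≤ c₀ + 1 ∧ ∀ i < n, (z i).2 + i = c₀)) := by
  have hnadj : ∀ i < n, ∀ j < n, 2 ≤ Nat.dist i j → ¬ (GhatPi2 v).Adj (z i) (z j) := by
    intro i hi j hj hfar
    rw [hadj i hi j hj]; omega
  -- far vertices, both with letter true, are in the same row
  have t1 : ∀ i < n, ∀ j < n, 2 ≤ Nat.dist i j → v (z i).2 = true → v (z j).2 = true →
      (z i).1 = (z j).1 := by
    intro i hi j hj hfar hti htj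
    by_contra hne
    rcases Nat.lt_or_ge (z i).1 (z j).1 with h | h
    · exact hnadj i hi j hj hfar (Or.inr (Or.inl ⟨h, htj⟩))
    · have : (z j).1 < (z i).1 := by omega
      exact hnadj i hi j hj hfar (Or.inr (Or.inr ⟨this, hti⟩))
  -- far vertex with letter true is in a row at most that of any other far vertex
  have t2 : ∀ i < n, ∀ j < n, 2 ≤ Nat.dist i j → v (z i).2 = true →
      (z i).1 ≤ (z j).1 := by
    intro i hi j hj hfar hti
    by_contra hlt
    exact hnadj i hi j hj hfar (Or.inr (Or.inr ⟨by omega, hti⟩))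
  -- every window contains both letters
  have s2 : ∀ a, a + (m + 2) ≤ n → ∀ b : Bool,
      ∃ i, a ≤ i ∧ i < a + (m + 2) ∧ v (z i).2 = b := by
    intro a ha b
    by_contra hcon
    push_neg at hcon
    have hconst : ∀ i, a ≤ i → i < a + (m + 2) → v (z i).2 = !b := by
      intro i h1 h2
      have := hcon i h1 h2
      cases hx : v (z i).2 <;> cases b <;> simp_all
    cases hbb : !b with
    | false =>
      -- all letters in the window false : edges must be horizontal
      have hH : ∀ i, a ≤ i → i + 1 < a + (m + 2) →
          (z i).1 = (z (i + 1)).1 ∧ Nat.dist (z i).2 (z (i + 1)).2 = 1 := by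
        intro i h1 h2
        have hAdj : (GhatPi2 v).Adj (z i) (z (i + 1)) := by
          rw [hadj i (by omega) (i + 1) (by omega), dist_def]; omega
        rcases hAdj with ⟨ha1, ha2⟩ | ⟨ha1, ha2⟩ | ⟨ha1, ha2⟩
        · exact ⟨ha1, ha2⟩
        · rw [hconst (i + 1) (by omega) h2, hbb] at ha2; exact absurd ha2 (by simp)
        · rw [hconst i h1 (by omega), hbb] at ha2; exact absurd ha2 (by simp)
      exact const_window_absurd v m hm z n hinj a ha (!b) hconst hH
    | true =>
      -- all letters in the window true : rows constant by t1
      have htt : ∀ i, a ≤ i → i < a + (m + 2) → v (z i).2 = true := by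
        intro i h1 h2; rw [hconst i h1 h2, hbb]
      have hrowpair : ∀ i, a ≤ i → i < a + (m + 2) → ∀ j, a ≤ j → j < a + (m + 2) →
          (z i).1 = (z j).1 := by
        intro i hi1 hi2 j hj1 hj2
        by_cases hfar : 2 ≤ Nat.dist i j
        · exact t1 i (by omega) j (by omega) hfar (htt i hi1 hi2) (htt j hj1 hj2)
        · -- pick a third far point in the window
          have hk : ∃ k, a ≤ k ∧ k < a + (m + 2) ∧ 2 ≤ Nat.dist k i ∧ 2 ≤ Nat.dist k j := by
            rw [dist_def] at hfar
            by_cases hlo : a + 2 ≤ min i j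
            · exact ⟨a, le_refl a, by omega, by rw [dist_def]; omega, by rw [dist_def]; omega⟩
            · exact ⟨a + (m + 1), by omega, by omega, by rw [dist_def]; omega,
                by rw [dist_def]; omega⟩
          obtain ⟨k, hk1, hk2, hk3, hk4⟩ := hk
          have e1 := t1 k (by omega) i (by omega) hk3 (htt k hk1 hk2) (htt i hi1 hi2)
          have e2 := t1 k (by omega) j (by omega) hk4 (htt k hk1 hk2) (htt j hj1 hj2)
          rw [← e1, e2]
      have hH : ∀ i, a ≤ i → i + 1 < a + (m + 2) →
          (z i).1 = (z (i + 1)).1 ∧ Nat.dist (z i).2 (z (i + 1)).2 = 1 := by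
        intro i h1 h2
        have hre : (z i).1 = (z (i + 1)).1 :=
          hrowpair i h1 (by omega) (i + 1) (by omega) h2
        have hAdj : (GhatPi2 v).Adj (z i) (z (i + 1)) := by
          rw [hadj i (by omega) (i + 1) (by omega), dist_def]; omega
        rcases hAdj with ⟨ha1, ha2⟩ | ⟨ha1, ha2⟩ | ⟨ha1, ha2⟩
        · exact ⟨ha1, ha2⟩
        · rw [hre] at ha1; omega
        · rw [hre] at ha1; omega
      exact const_window_absurd v m hm z n hinj a ha (!b) hconst hH
  have s3 : ∀ (b : Bool) (e₁ e₂ : ℕ), ∃ k < n, v (z k).2 = b ∧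
      2 ≤ Nat.dist k e₁ ∧ 2 ≤ Nat.dist k e₂ :=
    fun b e₁ e₂ => find_in_window (fun i => v (z i).2) m n s2 hn b e₁ e₂
  -- a reference true vertex
  obtain ⟨ks, hks, hksb, _, _⟩ := s3 true 0 0
  -- all true vertices share the row of ks
  have hTrow : ∀ i < n, v (z i).2 = true → (z i).1 = (z ks).1 := by
    intro i hi hti
    by_cases hfar : 2 ≤ Nat.dist i ks
    · exact t1 i hi ks hks hfar hti hksb
    · obtain ⟨k, hk, hkb, hk1, hk2⟩ := s3 true i ks
      have e1 := t1 i hi k hk (by rwa [Nat.dist_comm]) hti hkb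
      have e2 := t1 k hk ks hks hk2 hkb hksb
      rw [e1, e2]
  -- all vertices are in rows ≥ that of ks
  have hgeq : ∀ j < n, (z ks).1 ≤ (z j).1 := by
    intro j hj
    obtain ⟨k, hk, hkb, hk1, hk2⟩ := s3 true j j
    have := t2 k hk j hj hk1 hkb
    rw [hTrow k hk hkb] at this
    exact this
  -- no vertex in a higher row
  have hallrow : ∀ i < n, (z i).1 = (z ks).1 := by
    by_contra hcon
    push_neg at hcon
    obtain ⟨i0, hi0, hne0⟩ := hcon
    have hgt0 : (z ks).1 < (z i0).1 := lt_of_le_of_ne (hgeq i0 hi0) (Ne.symm hne0)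
    -- neighbours of a high vertex are in the same row
    have hnb : ∀ i < n, (z ks).1 < (z i).1 → ∀ j < n, Nat.dist i j = 1 →
        (z j).1 = (z i).1 := by
      intro i hi hhigh j hj hd
      have hAdj : (GhatPi2 v).Adj (z i) (z j) := by rw [hadj i hi j hj]; exact hd
      rcases hAdj with ⟨ha1, _⟩ | ⟨ha1, ha2⟩ | ⟨ha1, ha2⟩
      · exact ha1.symm
      · exfalso
        have := hTrow j hj ha2
        omega
      · exfalso
        have := hTrow i hi ha2
        omega
    have hup : ∀ d, ∀ i, i < n → (z ks).1 < (z i).1 → i + d < n → (z (i + d)).1 = (z i).1 := by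
      intro d
      induction d with
      | zero => intro i _ _ _; rfl
      | succ k ih =>
        intro i hi hh hd
        have hk := ih i hi hh (by omega)
        have := hnb (i + k) (by omega) (by rw [hk]; exact hh) (i + k + 1) (by omega)
          (by rw [dist_def]; omega)
        have hx : i + k + 1 = i + (k + 1) := by omega
        rw [hx] at this
        rw [this, hk]
    have hdown : ∀ d, ∀ i, i < n → (z ks).1 < (z i).1 → d ≤ i → (z (i - d)).1 = (z i).1 := by
      intro d
      induction d with
      | zero => intro i _ _ _; rfl
      | succ k ih =>
        intro i hi hh hd
        have hk := ih i hi hh (by omega)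
        have := hnb (i - k) (by omega) (by rw [hk]; exact hh) (i - k - 1) (by omega)
          (by rw [dist_def]; omega)
        have hx : i - k - 1 = i - (k + 1) := by omega
        rw [hx] at this
        rw [this, hk]
    rcases le_or_gt i0 ks with h | h
    · have := hup (ks - i0) i0 hi0 hgt0 (by omega)
      have hx : i0 + (ks - i0) = ks := by omega
      rw [hx] at this
      omega
    · have := hdown (i0 - ks) i0 hi0 hgt0 (by omega)
      have hx : i0 - (i0 - ks) = ks := by omega
      rw [hx] at this
      omega
  have hn0 : 0 < n := by omega
  have hall : ∀ i < n, ∀ j < n, (z i).1 = (z j).1 := by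
    intro i hi j hj
    rw [hallrow i hi, hallrow j hj]
  have hstep : ∀ i, i + 1 < n → Nat.dist ((z i).2) ((z (i + 1)).2) = 1 := by
    intro i hi
    have hAdj : (GhatPi2 v).Adj (z i) (z (i + 1)) := by
      rw [hadj i (by omega) (i + 1) (by omega), dist_def]; omega
    have hre := hall i (by omega) (i + 1) (by omega)
    rcases hAdj with ⟨_, ha2⟩ | ⟨ha1, _⟩ | ⟨ha1, _⟩
    · exact ha2
    · omega
    · omega
  have hcinj : ∀ i < n, ∀ j < n, (z (0 + i)).2 = (z (0 + j)).2 → i = j := by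
    intro i hi j hj hc
    simp only [Nat.zero_add] at hc
    exact hinj i hi j hj (Prod.ext (hall i hi j hj) hc)
  have hstep0 : ∀ i, i + 1 < n → Nat.dist ((z (0 + i)).2) ((z (0 + i + 1)).2) = 1 := by
    intro i hi
    simp only [Nat.zero_add]
    exact hstep i hi
  rcases mono_aux (fun j => (z j).2) 0 n hcinj hstep0 with hmono | hmono
  · refine ⟨(z 0).1, (z 0).2, fun i hi => hall i hi 0 hn0, Or.inl ?_⟩
    intro i hi
    have := hmono i hi
    simpa using this
  · refine ⟨(z 0).1, (z 0).2, fun i hi => hall i hi 0 hn0, Or.inr ⟨?_, ?_⟩⟩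
    · have := hmono (n - 1) (by omega)
      omega
    · intro i hi
      have := hmono i hi
      simpa using this

end IncompAux

namespace IncompAux

lemma dist_shift (p x y : ℕ) : Nat.dist (p + x) (p + y) = Nat.dist x y := by
  rw [dist_def, dist_def]; omega

/-- The two-row gadget graph for the Boolean sum. -/
def FXor (n : ℕ) (W : ℕ → Bool) : SimpleGraph (Fin 2 × Fin n) where
  Adj a b := (a.1 = b.1 ∧ Nat.dist a.2.val b.2.val = 1) ∨ (a.1 ≠ b.1 ∧ W a.2.val ≠ W b.2.val)
  symm := by
    constructor
    rintro a b (⟨h1, h2⟩ | ⟨h1, h2⟩)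
    · exact Or.inl ⟨h1.symm, by rwa [Nat.dist_comm]⟩
    · exact Or.inr ⟨h1.symm, h2.symm⟩
  loopless := by
    constructor
    rintro a (⟨_, h2⟩ | ⟨h1, _⟩)
    · rw [dist_def] at h2; omega
    · exact h1 rfl

/-- The two-row gadget graph for the second projection. -/
def FPi2 (n : ℕ) (W : ℕ → Bool) : SimpleGraph (Fin 2 × Fin n) where
  Adj a b := (a.1 = b.1 ∧ Nat.dist a.2.val b.2.val = 1) ∨
    (a.1 < b.1 ∧ W b.2.val = true) ∨ (b.1 < a.1 ∧ W a.2.val = true)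
  symm := by
    constructor
    rintro a b (⟨h1, h2⟩ | ⟨h1, h2⟩ | ⟨h1, h2⟩)
    · exact Or.inl ⟨h1.symm, by rwa [Nat.dist_comm]⟩
    · exact Or.inr (Or.inr ⟨h1, h2⟩)
    · exact Or.inr (Or.inl ⟨h1, h2⟩)
  loopless := by
    constructor
    rintro a (⟨_, h2⟩ | ⟨h1, _⟩ | ⟨h1, _⟩)
    · rw [dist_def] at h2; omega
    · exact lt_irrefl _ h1
    · exact lt_irrefl _ h1

/-- The canonical embedding of the gadget into `GhatXor u`. -/
def embXor (u : ℕ → Bool) (p n : ℕ) : FXor n (fun i => u (p + i)) ↪g GhatXor u where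
  toFun := fun q => (q.1.val, p + q.2.val)
  inj' := by
    rintro ⟨a1, a2⟩ ⟨b1, b2⟩ h
    dsimp only at h
    rw [Prod.mk.injEq] at h
    obtain ⟨h1, h2⟩ := h
    have e1 : a1 = b1 := Fin.val_injective h1
    have e2 : a2 = b2 := Fin.val_injective (by omega)
    rw [e1, e2]
  map_rel_iff' := by
    rintro ⟨a1, a2⟩ ⟨b1, b2⟩
    show ((a1.val = b1.val ∧ Nat.dist (p + a2.val) (p + b2.val) = 1) ∨
      (a1.val ≠ b1.val ∧ u (p + a2.val) ≠ u (p + b2.val))) ↔ _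
    rw [dist_shift]
    constructor
    · rintro (⟨h1, h2⟩ | ⟨h1, h2⟩)
      · exact Or.inl ⟨Fin.val_injective h1, h2⟩
      · exact Or.inr ⟨fun hc => h1 (congrArg Fin.val hc), h2⟩
    · rintro (⟨h1, h2⟩ | ⟨h1, h2⟩)
      · exact Or.inl ⟨congrArg Fin.val h1, h2⟩
      · exact Or.inr ⟨fun hc => h1 (Fin.val_injective hc), h2⟩

/-- The canonical embedding of the gadget into `GhatPi2 u`. -/
def embPi2 (u : ℕ → Bool) (p n : ℕ) : FPi2 n (fun i => u (p + i)) ↪g GhatPi2 u where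
  toFun := fun q => (q.1.val, p + q.2.val)
  inj' := by
    rintro ⟨a1, a2⟩ ⟨b1, b2⟩ h
    dsimp only at h
    rw [Prod.mk.injEq] at h
    obtain ⟨h1, h2⟩ := h
    have e1 : a1 = b1 := Fin.val_injective h1
    have e2 : a2 = b2 := Fin.val_injective (by omega)
    rw [e1, e2]
  map_rel_iff' := by
    rintro ⟨a1, a2⟩ ⟨b1, b2⟩
    show ((a1.val = b1.val ∧ Nat.dist (p + a2.val) (p + b2.val) = 1) ∨
      (a1.val < b1.val ∧ u (p + b2.val) = true) ∨ (b1.val < a1.val ∧ u (p + a2.val) = true)) ↔ _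
    rw [dist_shift]
    constructor
    · rintro (⟨h1, h2⟩ | ⟨h1, h2⟩ | ⟨h1, h2⟩)
      · exact Or.inl ⟨Fin.val_injective h1, h2⟩
      · exact Or.inr (Or.inl ⟨h1, h2⟩)
      · exact Or.inr (Or.inr ⟨h1, h2⟩)
    · rintro (⟨h1, h2⟩ | ⟨h1, h2⟩ | ⟨h1, h2⟩)
      · exact Or.inl ⟨congrArg Fin.val h1, h2⟩
      · exact Or.inr (Or.inl ⟨h1, h2⟩)
      · exact Or.inr (Or.inr ⟨h1, h2⟩)

/-- Transport of a graph on `Fin 2 × Fin n` to `Fin (2 * n)`. -/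
def toFinG (n : ℕ) (G : SimpleGraph (Fin 2 × Fin n)) : SimpleGraph (Fin (2 * n)) :=
  G.comap (finProdFinEquiv.symm : Fin (2 * n) ≃ Fin 2 × Fin n)

def embFromFin (n : ℕ) (G : SimpleGraph (Fin 2 × Fin n)) : toFinG n G ↪g G :=
  SimpleGraph.Embedding.comap
    ((finProdFinEquiv.symm : Fin (2 * n) ≃ Fin 2 × Fin n).toEmbedding) G

def embToFin (n : ℕ) (G : SimpleGraph (Fin 2 × Fin n)) : G ↪g toFinG n G where
  toFun := finProdFinEquiv
  inj' := finProdFinEquiv.injective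
  map_rel_iff' := by
    intro a b
    show G.Adj (finProdFinEquiv.symm (finProdFinEquiv a))
      (finProdFinEquiv.symm (finProdFinEquiv b)) ↔ _
    rw [Equiv.symm_apply_apply, Equiv.symm_apply_apply]

end IncompAux

namespace IncompAux

/-- Letter count hypothesis: each letter appears at three distinct positions. -/
def ThreeEach (n : ℕ) (W : ℕ → Bool) : Prop :=
  ∀ b : Bool, ∃ y₁ y₂ y₃, y₁ < n ∧ y₂ < n ∧ y₃ < n ∧ y₁ ≠ y₂ ∧ y₁ ≠ y₃ ∧ y₂ ≠ y₃ ∧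
    W y₁ = b ∧ W y₂ = b ∧ W y₃ = b

section Decode

variable (u' : ℕ → Bool) (m : ℕ) (n : ℕ) (W : ℕ → Bool)

set_option maxHeartbeats 1000000 in
lemma decode_xor (hm : WindowProp u' m) (hn : 3 * m + 12 ≤ n) (hW3 : ThreeEach n W)
    (f : FXor n W ↪g GhatXor u') :
    ∃ ε : Bool, IsFactor u' ((List.range n).map (fun i => xor (W i) ε)) ∨
      IsFactor u' (((List.range n).map (fun i => xor (W i) ε)).reverse) := by
  have hn0 : 0 < n := by omega
  obtain ⟨z0, hz0⟩ : ∃ z : ℕ → ℕ × ℕ, ∀ i (h : i < n), z i = f (0, ⟨i, h⟩) :=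
    ⟨fun i => if h : i < n then f (0, ⟨i, h⟩) else (0, 0), fun i h => dif_pos h⟩
  obtain ⟨z1, hz1⟩ : ∃ z : ℕ → ℕ × ℕ, ∀ i (h : i < n), z i = f (1, ⟨i, h⟩) :=
    ⟨fun i => if h : i < n then f (1, ⟨i, h⟩) else (0, 0), fun i h => dif_pos h⟩
  have hinj0 : ∀ i < n, ∀ j < n, z0 i = z0 j → i = j := by
    intro i hi j hj he
    rw [hz0 i hi, hz0 j hj] at he
    have := f.injective he
    rw [Prod.mk.injEq] at this
    exact congrArg Fin.val (this.2)
  have hinj1 : ∀ i < n, ∀ j < n, z1 i = z1 j → i = j := by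
    intro i hi j hj he
    rw [hz1 i hi, hz1 j hj] at he
    have := f.injective he
    rw [Prod.mk.injEq] at this
    exact congrArg Fin.val (this.2)
  have hadj0 : ∀ i < n, ∀ j < n, ((GhatXor u').Adj (z0 i) (z0 j) ↔ Nat.dist i j = 1) := by
    intro i hi j hj
    rw [hz0 i hi, hz0 j hj, f.map_rel_iff]
    constructor
    · rintro (⟨_, h2⟩ | ⟨h1, _⟩)
      · exact h2
      · exact absurd rfl h1
    · intro h
      exact Or.inl ⟨rfl, h⟩
  have hadj1 : ∀ i < n, ∀ j < n, ((GhatXor u').Adj (z1 i) (z1 j) ↔ Nat.dist i j = 1) := by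
    intro i hi j hj
    rw [hz1 i hi, hz1 j hj, f.map_rel_iff]
    constructor
    · rintro (⟨_, h2⟩ | ⟨h1, _⟩)
      · exact h2
      · exact absurd rfl h1
    · intro h
      exact Or.inl ⟨rfl, h⟩
  obtain ⟨R0, c0, hrow0, hcol0⟩ := xor_path u' m hm z0 n hn hinj0 hadj0
  obtain ⟨R1, c1, hrow1, hcol1⟩ := xor_path u' m hm z1 n hn hinj1 hadj1
  have hc1inj : ∀ y < n, ∀ y' < n, (z1 y).2 = (z1 y').2 → y = y' := by
    intro y hy y' hy' he
    rcases hcol1 with hI | ⟨_, hD⟩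
    · have e1 := hI y hy
      have e2 := hI y' hy'
      omega
    · have e1 := hD y hy
      have e2 := hD y' hy'
      omega
  have hcross : ∀ x < n, ∀ y < n,
      ((GhatXor u').Adj (z0 x) (z1 y) ↔ W x ≠ W y) := by
    intro x hx y hy
    rw [hz0 x hx, hz1 y hy, f.map_rel_iff]
    constructor
    · rintro (⟨h1, _⟩ | ⟨_, h2⟩)
      · exact absurd h1 (show ¬ (0 : Fin 2) = 1 by decide)
      · exact h2
    · intro h
      exact Or.inr ⟨(show ¬ (0 : Fin 2) = 1 by decide), h⟩
  -- the two rows are distinct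
  have hRR : R0 ≠ R1 := by
    intro hR
    obtain ⟨y₁, y₂, y₃, hy1, hy2, hy3, hne12, hne13, hne23, hb1, hb2, hb3⟩ := hW3 (!(W 0))
    have hd : ∀ y < n, W y = !(W 0) → Nat.dist ((z0 0).2) ((z1 y).2) = 1 := by
      intro y hy hb
      have hAdj : (GhatXor u').Adj (z0 0) (z1 y) := by
        rw [hcross 0 hn0 y hy, hb]
        cases W 0 <;> simp
      rcases hAdj with ⟨_, h2⟩ | ⟨h1, _⟩
      · exact h2
      · exact absurd (by rw [hrow0 0 hn0, hrow1 y hy, hR]) h1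
    have hd1 := hd y₁ hy1 hb1
    have hd2 := hd y₂ hy2 hb2
    have hd3 := hd y₃ hy3 hb3
    rw [dist_def] at hd1 hd2 hd3
    have : (z1 y₁).2 = (z1 y₂).2 ∨ (z1 y₁).2 = (z1 y₃).2 ∨ (z1 y₂).2 = (z1 y₃).2 := by omega
    rcases this with h | h | h
    · exact hne12 (hc1inj y₁ hy1 y₂ hy2 h)
    · exact hne13 (hc1inj y₁ hy1 y₃ hy3 h)
    · exact hne23 (hc1inj y₂ hy2 y₃ hy3 h)
  -- letters decode the word up to a complement
  have hWL : ∀ x < n, ∀ y < n, (W x ≠ W y ↔ u' ((z0 x).2) ≠ u' ((z1 y).2)) := by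
    intro x hx y hy
    rw [← hcross x hx y hy]
    constructor
    · rintro (⟨h1, _⟩ | ⟨_, h2⟩)
      · exact absurd (by rw [← hrow0 x hx, ← hrow1 y hy, h1]) hRR
      · exact h2
    · intro h
      exact Or.inr ⟨by rw [hrow0 x hx, hrow1 y hy]; exact hRR, h⟩
  refine ⟨xor (u' ((z1 0).2)) (W 0), ?_⟩
  have hlam : ∀ x < n, u' ((z0 x).2) = xor (W x) (xor (u' ((z1 0).2)) (W 0)) := by
    intro x hx
    have h := hWL x hx 0 hn0
    revert h
    generalize u' ((z0 x).2) = C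
    generalize u' ((z1 0).2) = D
    generalize W x = A
    generalize W 0 = B
    revert A B C D
    decide
  set ε := xor (u' ((z1 0).2)) (W 0) with hεdef
  set L := (List.range n).map (fun i => xor (W i) ε) with hLdef
  have hLlen : L.length = n := by simp [hLdef]
  rcases hcol0 with hI | ⟨hb, hD⟩
  · left
    refine ⟨c0, ?_⟩
    rw [hLlen]
    apply List.ext_getElem
    · simp [hLdef]
    · intro k h1 h2
      simp only [hLdef, List.getElem_map, List.getElem_range]
      have hkn : k < n := by simpa [hLdef] using h1
      rw [← hlam k hkn, hI k hkn]
  · right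
    refine ⟨c0 - (n - 1), ?_⟩
    rw [List.length_reverse, hLlen]
    apply List.ext_getElem
    · simp [hLdef]
    · intro k h1 h2
      have hkn : k < n := by simpa [hLdef] using h1
      rw [List.getElem_reverse]
      simp only [hLdef, List.getElem_map, List.getElem_range, List.length_map,
        List.length_range]
      have hkn' : n - 1 - k < n := by omega
      rw [← hlam (n - 1 - k) hkn']
      have := hD (n - 1 - k) hkn'
      congr 1
      omega

set_option maxHeartbeats 1000000 in
lemma decode_pi2 (hm : WindowProp u' m) (hm3 : 3 ≤ m) (hn : 3 * m + 12 ≤ n)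
    (hW3 : ThreeEach n W) (f : FPi2 n W ↪g GhatPi2 u') :
    IsFactor u' ((List.range n).map W) ∨
      IsFactor u' (((List.range n).map W).reverse) := by
  have hn0 : 0 < n := by omega
  obtain ⟨z0, hz0⟩ : ∃ z : ℕ → ℕ × ℕ, ∀ i (h : i < n), z i = f (0, ⟨i, h⟩) :=
    ⟨fun i => if h : i < n then f (0, ⟨i, h⟩) else (0, 0), fun i h => dif_pos h⟩
  obtain ⟨z1, hz1⟩ : ∃ z : ℕ → ℕ × ℕ, ∀ i (h : i < n), z i = f (1, ⟨i, h⟩) :=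
    ⟨fun i => if h : i < n then f (1, ⟨i, h⟩) else (0, 0), fun i h => dif_pos h⟩
  have hinj0 : ∀ i < n, ∀ j < n, z0 i = z0 j → i = j := by
    intro i hi j hj he
    rw [hz0 i hi, hz0 j hj] at he
    have := f.injective he
    rw [Prod.mk.injEq] at this
    exact congrArg Fin.val (this.2)
  have hinj1 : ∀ i < n, ∀ j < n, z1 i = z1 j → i = j := by
    intro i hi j hj he
    rw [hz1 i hi, hz1 j hj] at he
    have := f.injective he
    rw [Prod.mk.injEq] at this
    exact congrArg Fin.val (this.2)
  have hadj0 : ∀ i < n, ∀ j < n, ((GhatPi2 u').Adj (z0 i) (z0 j) ↔ Nat.dist i j = 1) := by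
    intro i hi j hj
    rw [hz0 i hi, hz0 j hj, f.map_rel_iff]
    constructor
    · rintro (⟨_, h2⟩ | ⟨h1, _⟩ | ⟨h1, _⟩)
      · exact h2
      · exact absurd h1 (lt_irrefl _)
      · exact absurd h1 (lt_irrefl _)
    · intro h
      exact Or.inl ⟨rfl, h⟩
  have hadj1 : ∀ i < n, ∀ j < n, ((GhatPi2 u').Adj (z1 i) (z1 j) ↔ Nat.dist i j = 1) := by
    intro i hi j hj
    rw [hz1 i hi, hz1 j hj, f.map_rel_iff]
    constructor
    · rintro (⟨_, h2⟩ | ⟨h1, _⟩ | ⟨h1, _⟩)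
      · exact h2
      · exact absurd h1 (lt_irrefl _)
      · exact absurd h1 (lt_irrefl _)
    · intro h
      exact Or.inl ⟨rfl, h⟩
  obtain ⟨R0, c0, hrow0, hcol0⟩ := pi2_path u' m hm hm3 z0 n hn hinj0 hadj0
  obtain ⟨R1, c1, hrow1, hcol1⟩ := pi2_path u' m hm hm3 z1 n hn hinj1 hadj1
  have hc0inj : ∀ y < n, ∀ y' < n, (z0 y).2 = (z0 y').2 → y = y' := by
    intro y hy y' hy' he
    rcases hcol0 with hI | ⟨_, hD⟩
    · have e1 := hI y hy
      have e2 := hI y' hy'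
      omega
    · have e1 := hD y hy
      have e2 := hD y' hy'
      omega
  have hcross : ∀ x < n, ∀ y < n,
      ((GhatPi2 u').Adj (z0 x) (z1 y) ↔ W y = true) := by
    intro x hx y hy
    rw [hz0 x hx, hz1 y hy, f.map_rel_iff]
    constructor
    · rintro (⟨h1, _⟩ | ⟨_, h2⟩ | ⟨h1, _⟩)
      · exact absurd h1 (show ¬ (0 : Fin 2) = 1 by decide)
      · exact h2
      · exact absurd h1 (show ¬ (1 : Fin 2) < 0 by decide)
    · intro h
      exact Or.inr (Or.inl ⟨(show (0 : Fin 2) < 1 by decide), h⟩)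
  obtain ⟨yt, _, _, hyt, _, _, _, _, _, hbt, _, _⟩ := hW3 true
  obtain ⟨yf, _, _, hyf, _, _, _, _, _, hbf, _, _⟩ := hW3 false
  rcases lt_trichotomy R0 R1 with hR | hR | hR
  · -- R0 < R1 : the letters of row 1 decode the word
    have hAdj' : ∀ x < n, ∀ y < n,
        ((GhatPi2 u').Adj (z0 x) (z1 y) ↔ u' ((z1 y).2) = true) := by
      intro x hx y hy
      constructor
      · rintro (⟨h1, _⟩ | ⟨_, h2⟩ | ⟨h1, _⟩)
        · rw [hrow0 x hx, hrow1 y hy] at h1; omega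
        · exact h2
        · rw [hrow0 x hx, hrow1 y hy] at h1; omega
      · intro h
        exact Or.inr (Or.inl ⟨by rw [hrow0 x hx, hrow1 y hy]; exact hR, h⟩)
    have hμ : ∀ y < n, W y = u' ((z1 y).2) := by
      intro y hy
      have h := (hcross 0 hn0 y hy).symm.trans (hAdj' 0 hn0 y hy)
      revert h
      generalize W y = A
      generalize u' ((z1 y).2) = B
      revert A B
      decide
    rcases hcol1 with hI | ⟨hb, hD⟩
    · left
      refine ⟨c1, ?_⟩
      rw [List.length_map, List.length_range]
      apply List.ext_getElem
      · simp
      · intro k h1 h2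
        simp only [List.getElem_map, List.getElem_range]
        have hkn : k < n := by simpa using h1
        rw [hμ k hkn, hI k hkn]
    · right
      refine ⟨c1 - (n - 1), ?_⟩
      rw [List.length_reverse, List.length_map, List.length_range]
      apply List.ext_getElem
      · simp
      · intro k h1 h2
        have hkn : k < n := by simpa using h1
        rw [List.getElem_reverse]
        simp only [List.getElem_map, List.getElem_range, List.length_map, List.length_range]
        have hkn' : n - 1 - k < n := by omega
        rw [hμ (n - 1 - k) hkn']
        have := hD (n - 1 - k) hkn'
        congr 1
        omega
  · -- R0 = R1 : impossible
    exfalso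
    have hd : ∀ x < n, Nat.dist ((z0 x).2) ((z1 yt).2) = 1 := by
      intro x hx
      have hAdj : (GhatPi2 u').Adj (z0 x) (z1 yt) := by
        rw [hcross x hx yt hyt]; exact hbt
      rcases hAdj with ⟨_, h2⟩ | ⟨h1, _⟩ | ⟨h1, _⟩
      · exact h2
      · rw [hrow0 x hx, hrow1 yt hyt] at h1; omega
      · rw [hrow0 x hx, hrow1 yt hyt] at h1; omega
    have hd1 := hd 0 (by omega)
    have hd2 := hd 1 (by omega)
    have hd3 := hd 2 (by omega)
    rw [dist_def] at hd1 hd2 hd3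
    have : (z0 0).2 = (z0 1).2 ∨ (z0 0).2 = (z0 2).2 ∨ (z0 1).2 = (z0 2).2 := by omega
    rcases this with h | h | h
    · exact absurd (hc0inj 0 (by omega) 1 (by omega) h) (by omega)
    · exact absurd (hc0inj 0 (by omega) 2 (by omega) h) (by omega)
    · exact absurd (hc0inj 1 (by omega) 2 (by omega) h) (by omega)
  · -- R1 < R0 : impossible
    exfalso
    have hAdj'' : ∀ y < n,
        ((GhatPi2 u').Adj (z0 0) (z1 y) ↔ u' ((z0 0).2) = true) := by
      intro y hy
      constructor
      · rintro (⟨h1, _⟩ | ⟨h1, _⟩ | ⟨_, h2⟩)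
        · rw [hrow0 0 hn0, hrow1 y hy] at h1; omega
        · rw [hrow0 0 hn0, hrow1 y hy] at h1; omega
        · exact h2
      · intro h
        exact Or.inr (Or.inr ⟨by rw [hrow0 0 hn0, hrow1 y hy]; exact hR, h⟩)
    have h1 : u' ((z0 0).2) = true := by
      rw [← hAdj'' yt hyt, hcross 0 hn0 yt hyt]; exact hbt
    have h2 : ¬ u' ((z0 0).2) = true := by
      rw [← hAdj'' yf hyf, hcross 0 hn0 yf hyf]
      simp [hbf]
    exact h2 h1

end Decode

end IncompAux

namespace IncompAux

abbrev compL (w : List Bool) : List Bool := w.map (fun b => !b)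

lemma compL_invol (w : List Bool) : compL (compL w) = w := by
  simp [compL, List.map_map, Function.comp_def, Bool.not_not]

lemma op4_invol (w : List Bool) : compL ((compL w.reverse).reverse) = w := by
  simp [compL, List.map_map, Function.comp_def, Bool.not_not]

lemma get_bad {u u' : ℕ → Bool} (hur' : UniformlyRecurrent u')
    (op : List Bool → List Bool)
    (hop_len : ∀ w : List Bool, (op w).length = w.length)
    (hop_inv : ∀ w : List Bool, op (op w) = w)
    (hop_inf : ∀ {a b : List Bool}, a <:+: b → op a <:+: op b)
    (h : {w : List Bool | IsFactor u w} ≠ op '' {w : List Bool | IsFactor u' w}) :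
    ∃ w, IsFactor u w ∧ ¬ IsFactor u' (op w) := by
  by_contra hc
  push_neg at hc
  exact h (closure_lemma hur' op hop_len hop_inv hop_inf hc)

lemma image_invol (op : List Bool → List Bool) (hinv : ∀ w, op (op w) = w)
    {S T : Set (List Bool)} (h : T = op '' S) : S = op '' T := by
  rw [h, Set.image_image]
  ext x
  simp only [Set.mem_image]
  constructor
  · intro hx; exact ⟨x, hx, hinv x⟩
  · rintro ⟨y, hy, rfl⟩; rwa [hinv y]

/-- Combination of bad factors into a single long bad factor. -/
lemma combine {u u' : ℕ → Bool} (hur : UniformlyRecurrent u) (N : ℕ)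
    (e₁ : ∃ w, IsFactor u w ∧ ¬ IsFactor u' w)
    (e₂ : ∃ w, IsFactor u w ∧ ¬ IsFactor u' w.reverse)
    (e₃ : ∃ w, IsFactor u w ∧ ¬ IsFactor u' (compL w))
    (e₄ : ∃ w, IsFactor u w ∧ ¬ IsFactor u' (compL w.reverse)) :
    ∃ q nn, N ≤ nn ∧ ¬ IsFactor u' (fac u q nn) ∧ ¬ IsFactor u' ((fac u q nn).reverse) ∧
      ¬ IsFactor u' (compL (fac u q nn)) ∧ ¬ IsFactor u' ((compL (fac u q nn)).reverse) := by
  obtain ⟨w₁, hw₁, hb₁⟩ := e₁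
  obtain ⟨w₂, hw₂, hb₂⟩ := e₂
  obtain ⟨w₃, hw₃, hb₃⟩ := e₃
  obtain ⟨w₄, hw₄, hb₄⟩ := e₄
  set ns : ℕ := max (max (max w₁.length w₂.length) (max w₃.length w₄.length)) N with hns
  obtain ⟨m, hm⟩ := hur ns
  have hinf : ∀ w : List Bool, IsFactor u w → w.length ≤ ns → w <:+: fac u 0 m := by
    intro w hw hwlen
    obtain ⟨p, hp⟩ := hw
    have hpre : w <+: fac u p ns := by
      rw [hp]
      exact fac_prefix u p hwlen
    have hinf2 : fac u p ns <:+: fac u 0 m :=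
      hm (fac u p ns) (fac u 0 m) (isFactor_fac u p ns) (isFactor_fac u 0 m)
        (fac_length u p ns) (fac_length u 0 m)
    exact hpre.isInfix.trans hinf2
  have h₁ : w₁ <:+: fac u 0 m := hinf w₁ hw₁ (by omega)
  have h₂ : w₂ <:+: fac u 0 m := hinf w₂ hw₂ (by omega)
  have h₃ : w₃ <:+: fac u 0 m := hinf w₃ hw₃ (by omega)
  have h₄ : w₄ <:+: fac u 0 m := hinf w₄ hw₄ (by omega)
  have hNm : N ≤ m := by
    have := h₁.length_le
    have h5 : (fac u 0 m).length = m := fac_length u 0 m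
    have h6 : ns ≤ m := by
      have h7 : fac u 0 ns <:+: fac u 0 m :=
        hm (fac u 0 ns) (fac u 0 m) (isFactor_fac u 0 ns) (isFactor_fac u 0 m)
          (fac_length u 0 ns) (fac_length u 0 m)
      have := h7.length_le
      simp only [fac_length] at this
      exact this
    omega
  refine ⟨0, m, hNm, ?_, ?_, ?_, ?_⟩
  · intro hf
    exact hb₁ (isFactor_infix hf h₁)
  · intro hf
    exact hb₂ (isFactor_infix hf (List.reverse_infix.mpr h₂))
  · intro hf
    exact hb₃ (isFactor_infix hf (List.IsInfix.map _ h₃))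
  · intro hf
    refine hb₄ (isFactor_infix hf ?_)
    have h5 : compL w₄.reverse <:+: compL ((fac u 0 m).reverse) :=
      List.IsInfix.map _ (List.reverse_infix.mpr h₄)
    rwa [show compL ((fac u 0 m).reverse) = (compL (fac u 0 m)).reverse from
      List.map_reverse] at h5

lemma threeEach_of_window {u : ℕ → Bool} {m₁ : ℕ} (hwin : WindowProp u m₁)
    (q n : ℕ) (hn : 3 * m₁ ≤ n) : ThreeEach n (fun i => u (q + i)) := by
  intro b
  obtain ⟨i₁, hi₁, hb₁⟩ := hwin q b
  obtain ⟨i₂, hi₂, hb₂⟩ := hwin (q + m₁) b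
  obtain ⟨i₃, hi₃, hb₃⟩ := hwin (q + 2 * m₁) b
  refine ⟨i₁, m₁ + i₂, 2 * m₁ + i₃, by omega, by omega, by omega, by omega, by omega,
    by omega, hb₁, ?_, ?_⟩
  · show u (q + (m₁ + i₂)) = b
    rw [show q + (m₁ + i₂) = q + m₁ + i₂ by omega]
    exact hb₂
  · show u (q + (2 * m₁ + i₃)) = b
    rw [show q + (2 * m₁ + i₃) = q + 2 * m₁ + i₃ by omega]
    exact hb₃

end IncompAux

namespace IncompAux

lemma key {u u' : ℕ → Bool} (hur : UniformlyRecurrent u) (hur' : UniformlyRecurrent u')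
    (hnc : ∃ m n : ℕ, u m ≠ u n) (hnc' : ∃ m n : ℕ, u' m ≠ u' n)
    (e₁ : ∃ w, IsFactor u w ∧ ¬ IsFactor u' w)
    (e₂ : ∃ w, IsFactor u w ∧ ¬ IsFactor u' w.reverse)
    (e₃ : ∃ w, IsFactor u w ∧ ¬ IsFactor u' (compL w))
    (e₄ : ∃ w, IsFactor u w ∧ ¬ IsFactor u' (compL w.reverse)) :
    ¬ AgeSubset (GhatXor u) (GhatXor u') ∧ ¬ AgeSubset (GhatPi2 u) (GhatPi2 u') := by
  obtain ⟨m', hm'3, hm'⟩ := exists_windowProp hur' hnc'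
  obtain ⟨m₁, hm₁3, hm₁⟩ := exists_windowProp hur hnc
  obtain ⟨q, nn, hnn, hbad1, hbad2, hbad3, hbad4⟩ :=
    combine hur (3 * m' + 12 + 3 * m₁) e₁ e₂ e₃ e₄
  have hn1 : 3 * m' + 12 ≤ nn := by omega
  have hW3 : ThreeEach nn (fun i => u (q + i)) := threeEach_of_window hm₁ q nn (by omega)
  have hxf : (List.range nn).map (fun i => xor (u (q + i)) false) = fac u q nn := by
    simp [fac]
  have hxt : (List.range nn).map (fun i => xor (u (q + i)) true) = compL (fac u q nn) := by
    simp [fac, compL, List.map_map, Function.comp_def, Bool.xor_true]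
  constructor
  · intro hsub
    have hemb1 : Nonempty ((toFinG nn (FXor nn (fun i => u (q + i)))) ↪g GhatXor u) :=
      ⟨(embXor u q nn).comp (embFromFin nn _)⟩
    obtain ⟨g⟩ := hsub (2 * nn) _ hemb1
    have f := g.comp (embToFin nn (FXor nn (fun i => u (q + i))))
    obtain ⟨ε, hcase⟩ := decode_xor u' m' nn (fun i => u (q + i)) hm' hn1 hW3 f
    cases ε
    · rcases hcase with hc | hc
      · rw [hxf] at hc; exact hbad1 hc
      · rw [hxf] at hc; exact hbad2 hc
    · rcases hcase with hc | hc
      · rw [hxt] at hc; exact hbad3 hc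
      · rw [hxt] at hc; exact hbad4 hc
  · intro hsub
    have hemb1 : Nonempty ((toFinG nn (FPi2 nn (fun i => u (q + i)))) ↪g GhatPi2 u) :=
      ⟨(embPi2 u q nn).comp (embFromFin nn _)⟩
    obtain ⟨g⟩ := hsub (2 * nn) _ hemb1
    have f := g.comp (embToFin nn (FPi2 nn (fun i => u (q + i))))
    have hfac : (List.range nn).map (fun i => u (q + i)) = fac u q nn := rfl
    rcases decode_pi2 u' m' nn (fun i => u (q + i)) hm' hm'3 hn1 hW3 f with hc | hc
    · rw [hfac] at hc; exact hbad1 hc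
    · rw [hfac] at hc; exact hbad2 hc

end IncompAux

open IncompAux in
theorem nonequivalent_factor_sets_give_incomparable_ages
    (u u' : ℕ → Bool) (hur : UniformlyRecurrent u) (hur' : UniformlyRecurrent u')
    (hnc : ∃ m n : ℕ, u m ≠ u n) (hnc' : ∃ m n : ℕ, u' m ≠ u' n)
    (h1 : {w : List Bool | IsFactor u w} ≠ {w : List Bool | IsFactor u' w})
    (h2 : {w : List Bool | IsFactor u w} ≠
      List.reverse '' {w : List Bool | IsFactor u' w})
    (h3 : {w : List Bool | IsFactor u w} ≠
      (fun w : List Bool => w.map (fun b => !b)) '' {w : List Bool | IsFactor u' w})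
    (h4 : {w : List Bool | IsFactor u w} ≠
      (fun w : List Bool => w.map (fun b => !b)) ''
        (List.reverse '' {w : List Bool | IsFactor u' w})) :
    (¬ AgeSubset (GhatXor u) (GhatXor u') ∧ ¬ AgeSubset (GhatXor u') (GhatXor u)) ∧
      (¬ AgeSubset (GhatPi2 u) (GhatPi2 u') ∧ ¬ AgeSubset (GhatPi2 u') (GhatPi2 u)) := by
  classical
  -- reshape h4
  have h4a : {w : List Bool | IsFactor u w} ≠
      (fun w : List Bool => compL w.reverse) '' {w : List Bool | IsFactor u' w} := by
    rw [Set.image_image] at h4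
    exact h4
  -- the op-properties
  have hlen_rev : ∀ w : List Bool, w.reverse.length = w.length := fun w => List.length_reverse
  have hlen_comp : ∀ w : List Bool, (compL w).length = w.length := fun w => by simp [compL]
  have hlen_op4 : ∀ w : List Bool, (compL w.reverse).length = w.length := fun w => by simp [compL]
  have hinf_rev : ∀ {a b : List Bool}, a <:+: b → a.reverse <:+: b.reverse :=
    fun h => List.reverse_infix.mpr h
  have hinf_comp : ∀ {a b : List Bool}, a <:+: b → compL a <:+: compL b :=
    fun h => List.IsInfix.map _ h
  have hinf_op4 : ∀ {a b : List Bool}, a <:+: b → compL a.reverse <:+: compL b.reverse :=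
    fun h => List.IsInfix.map _ (List.reverse_infix.mpr h)
  have hinv_op4 : ∀ w : List Bool, compL ((compL w.reverse).reverse) = w := op4_invol
  -- the four bad factors in the direction u → u'
  have e₁ : ∃ w, IsFactor u w ∧ ¬ IsFactor u' w := by
    have := get_bad (u := u) (u' := u') hur' (fun w => w) (fun _ => rfl) (fun _ => rfl)
      (fun h => h) (by rwa [Set.image_id'])
    exact this
  have e₂ : ∃ w, IsFactor u w ∧ ¬ IsFactor u' w.reverse :=
    get_bad hur' List.reverse hlen_rev List.reverse_reverse hinf_rev h2
  have e₃ : ∃ w, IsFactor u w ∧ ¬ IsFactor u' (compL w) :=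
    get_bad hur' compL hlen_comp compL_invol hinf_comp h3
  have e₄ : ∃ w, IsFactor u w ∧ ¬ IsFactor u' (compL w.reverse) :=
    get_bad hur' (fun w => compL w.reverse) hlen_op4 hinv_op4 hinf_op4 h4a
  -- the symmetric hypotheses
  have h1' : {w : List Bool | IsFactor u' w} ≠ {w : List Bool | IsFactor u w} := Ne.symm h1
  have h2' : {w : List Bool | IsFactor u' w} ≠
      List.reverse '' {w : List Bool | IsFactor u w} := by
    intro heq
    exact h2 (image_invol List.reverse List.reverse_reverse heq)
  have h3' : {w : List Bool | IsFactor u' w} ≠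
      compL '' {w : List Bool | IsFactor u w} := by
    intro heq
    exact h3 (image_invol compL compL_invol heq)
  have h4a' : {w : List Bool | IsFactor u' w} ≠
      (fun w : List Bool => compL w.reverse) '' {w : List Bool | IsFactor u w} := by
    intro heq
    exact h4a (image_invol (fun w => compL w.reverse) hinv_op4 heq)
  have e₁' : ∃ w, IsFactor u' w ∧ ¬ IsFactor u w := by
    have := get_bad (u := u') (u' := u) hur (fun w => w) (fun _ => rfl) (fun _ => rfl)
      (fun h => h) (by rwa [Set.image_id'])
    exact this
  have e₂' : ∃ w, IsFactor u' w ∧ ¬ IsFactor u w.reverse :=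
    get_bad hur List.reverse hlen_rev List.reverse_reverse hinf_rev h2'
  have e₃' : ∃ w, IsFactor u' w ∧ ¬ IsFactor u (compL w) :=
    get_bad hur compL hlen_comp compL_invol hinf_comp h3'
  have e₄' : ∃ w, IsFactor u' w ∧ ¬ IsFactor u (compL w.reverse) :=
    get_bad hur (fun w => compL w.reverse) hlen_op4 hinv_op4 hinf_op4 h4a'
  have k1 := key hur hur' hnc hnc' e₁ e₂ e₃ e₄
  have k2 := key hur' hur hnc' hnc e₁' e₂' e₃' e₄'
  exact ⟨⟨k1.1, k2.1⟩, ⟨k1.2, k2.2⟩⟩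
end
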